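/- arXiv:2408.03577 — 7 statements merged into one kernel-verified Lean document; each statement's English description precedes it below -/
import Mathlib

section
/- Let f = f_{a,δ,p} be a Hénon-form map (so δ ≠ 0 and deg p ≥ 2). Then there exists R₀ > 1 such that for every R ≥ R₀ there exists ρ > 1 such that f satisfies condition (A) for (R, ρ). -/
open Complex Filter Set Topology MeasureTheory Bornology

noncomputable section

/-- A Hénon-form map `f(x,y) = (y + a, p(y) - δ x)` with `δ ≠ 0` and `deg p ≥ 2`. -/
structure HenonMap : Type where
  a : ℂ
  δ : ℂ
  p : Polynomial ℂ
  hδ : δ ≠ 0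
  hdeg : 2 ≤ p.natDegree

namespace HenonMap

/-- The map itself. -/
def toFun (f : HenonMap) (z : ℂ × ℂ) : ℂ × ℂ :=
  (z.2 + f.a, f.p.eval z.2 - f.δ * z.1)

/-- The inverse map `f⁻¹(x,y) = (δ⁻¹ (p(x - a) - y), x - a)`. -/
def invFun (f : HenonMap) (z : ℂ × ℂ) : ℂ × ℂ :=
  (f.δ⁻¹ * (f.p.eval (z.1 - f.a) - z.2), z.1 - f.a)

end HenonMap

/-- `V_R⁺ = {(x,y) : max(R,|x|) < |y|}`. -/
def VPlus (R : ℝ) : Set (ℂ × ℂ) := {z | max R (‖z.1‖) < ‖z.2‖}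

/-- `V_R⁻ = {(x,y) : max(R,|y|) < |x|}`. -/
def VMinus (R : ℝ) : Set (ℂ × ℂ) := {z | max R (‖z.2‖) < ‖z.1‖}

/-- `D_R = {(x,y) : max(|x|,|y|) < R}`. -/
def DDisk (R : ℝ) : Set (ℂ × ℂ) := {z | max (‖z.1‖) (‖z.2‖) < R}

/-- Condition (A) for `(R, ρ)`. -/
def CondA (f : HenonMap) (R ρ : ℝ) : Prop :=
  (∀ z ∈ closure (VPlus R),
    f.toFun z ∈ VPlus R ∧ ρ * ‖z.2‖ < ‖(f.toFun z).2‖) ∧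
  (∀ z ∈ closure (VMinus R),
    f.invFun z ∈ VMinus R ∧ ρ * ‖z.1‖ < ‖(f.invFun z).1‖)

/-- A parameter-bounded family of Hénon-form maps. -/
def ParamBounded (Γ : Set HenonMap) : Prop :=
  ∃ (D : ℕ) (A d₀ Δ m M : ℝ),
    2 ≤ D ∧ 0 ≤ A ∧ 0 < d₀ ∧ d₀ ≤ Δ ∧ 0 < m ∧ m ≤ M ∧
    ∀ f ∈ Γ,
      f.p.natDegree ≤ D ∧ ‖f.a‖ ≤ A ∧
      d₀ ≤ ‖f.δ‖ ∧ ‖f.δ‖ ≤ Δ ∧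
      (∀ i : ℕ, ‖f.p.coeff i‖ ≤ M) ∧
      m ≤ ‖f.p.leadingCoeff‖

/-- Forward composition: `fwd γ n = γ_{n-1} ∘ ⋯ ∘ γ₀`. -/
def fwd (γ : ℤ → HenonMap) : ℕ → (ℂ × ℂ) → ℂ × ℂ
  | 0 => id
  | n + 1 => fun z => (γ (n : ℤ)).toFun (fwd γ n z)

/-- Backward composition: `bwd γ n = γ_{-n}⁻¹ ∘ ⋯ ∘ γ_{-1}⁻¹`. -/
def bwd (γ : ℤ → HenonMap) : ℕ → (ℂ × ℂ) → ℂ × ℂ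
  | 0 => id
  | n + 1 => fun z => (γ (-((n : ℤ) + 1))).invFun (bwd γ n z)

/-- `K_γ⁺` : points with bounded forward orbit. -/
def KPlus (γ : ℤ → HenonMap) : Set (ℂ × ℂ) :=
  {z | IsBounded (Set.range fun n : ℕ => fwd γ n z)}

/-- `K_γ⁻` : points with bounded backward orbit. -/
def KMinus (γ : ℤ → HenonMap) : Set (ℂ × ℂ) :=
  {z | IsBounded (Set.range fun n : ℕ => bwd γ n z)}

/-- `I_γ⁺` : points whose forward orbit tends to infinity in norm. -/
def IPlus (γ : ℤ → HenonMap) : Set (ℂ × ℂ) :=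
  {z | Tendsto (fun n : ℕ => ‖fwd γ n z‖) atTop atTop}

/-- `I_γ⁻` : points whose backward orbit tends to infinity in norm. -/
def IMinus (γ : ℤ → HenonMap) : Set (ℂ × ℂ) :=
  {z | Tendsto (fun n : ℕ => ‖bwd γ n z‖) atTop atTop}

/-- The iterated shift: `(σⁿ γ)_j = γ_{j+n}`. -/
def shiftIter (γ : ℤ → HenonMap) (n : ℕ) : ℤ → HenonMap := fun j => γ (j + n)

/-- `log⁺ t = max (log t) 0`. -/
def logPlus (t : ℝ) : ℝ := max (Real.log t) 0

/-- `G_{γ,n}⁺(z) = (deg γ_{n-1} ⋯ deg γ₀)⁻¹ log⁺ ‖γ_{n-1} ∘ ⋯ ∘ γ₀ (z)‖`. -/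
def GPlusN (γ : ℤ → HenonMap) (n : ℕ) (z : ℂ × ℂ) : ℝ :=
  (∏ j ∈ Finset.range n, ((γ (j : ℤ)).p.natDegree : ℝ))⁻¹ * logPlus ‖fwd γ n z‖

/-- `G_{γ,n}⁻(z) = (deg γ_{-1} ⋯ deg γ_{-n})⁻¹ log⁺ ‖γ_{-n}⁻¹ ∘ ⋯ ∘ γ_{-1}⁻¹ (z)‖`. -/
def GMinusN (γ : ℤ → HenonMap) (n : ℕ) (z : ℂ × ℂ) : ℝ :=
  (∏ j ∈ Finset.range n, ((γ (-((j : ℤ) + 1))).p.natDegree : ℝ))⁻¹ * logPlus ‖bwd γ n z‖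

/-- Lower bound on `‖p(w)‖` for `‖w‖` large, for `deg p ≥ 2`. -/
lemma poly_lower (p : Polynomial ℂ) (hn : 2 ≤ p.natDegree) (L : ℝ) (hL : 0 ≤ L) (w : ℂ)
    (h1 : 1 ≤ ‖w‖)
    (h2 : (∑ i ∈ Finset.range p.natDegree, ‖p.coeff i‖) + L ≤ ‖p.leadingCoeff‖ * ‖w‖) :
    L * ‖w‖ ≤ ‖p.eval w‖ := by
  set n := p.natDegree with hn'
  set S := ∑ i ∈ Finset.range n, ‖p.coeff i‖ with hS'
  set m := ‖p.leadingCoeff‖ with hm'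
  have hw0 : (0:ℝ) < ‖w‖ := lt_of_lt_of_le one_pos h1
  set A := ∑ i ∈ Finset.range n, p.coeff i * w ^ i with hA'
  set B := p.leadingCoeff * w ^ n with hB'
  have e : p.eval w = A + B := by
    rw [Polynomial.eval_eq_sum_range, Finset.sum_range_succ]; rfl
  have hrest : ‖A‖ ≤ S * ‖w‖ ^ (n - 1) := by
    rw [hS', Finset.sum_mul]
    refine (norm_sum_le _ _).trans (Finset.sum_le_sum fun i hi => ?_)
    have hi' := Finset.mem_range.mp hi
    rw [norm_mul, norm_pow]
    exact mul_le_mul_of_nonneg_left (pow_le_pow_right₀ h1 (by omega)) (norm_nonneg _)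
  have htop : ‖B‖ = m * ‖w‖ ^ n := by rw [hB', norm_mul, norm_pow]
  have hBle : ‖B‖ ≤ ‖p.eval w‖ + ‖A‖ := by
    rw [e]
    simpa using norm_sub_le (A + B) A
  have hfac : ‖w‖ ^ n = ‖w‖ ^ (n - 1) * ‖w‖ := by
    rw [← pow_succ]; congr 1; omega
  have h3 : ‖w‖ ≤ ‖w‖ ^ (n - 1) := by
    calc ‖w‖ = ‖w‖ ^ 1 := (pow_one _).symm
    _ ≤ ‖w‖ ^ (n - 1) := pow_le_pow_right₀ h1 (by omega)
  have h4 : L ≤ m * ‖w‖ - S := by linarith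
  have h5 : L * ‖w‖ ≤ (m * ‖w‖ - S) * ‖w‖ ^ (n - 1) :=
    mul_le_mul h4 h3 hw0.le (by linarith)
  have h6 : (m * ‖w‖ - S) * ‖w‖ ^ (n - 1) = m * ‖w‖ ^ n - S * ‖w‖ ^ (n - 1) := by
    rw [hfac]; ring
  linarith

/-- every Hénon-form map satisfies condition (A) for `(R, ρ)` for some
`ρ > 1`, for every sufficiently large `R`. -/
theorem stmt_0 (f : HenonMap) :
    ∃ R₀ : ℝ, 1 < R₀ ∧ ∀ R : ℝ, R₀ ≤ R → ∃ ρ : ℝ, 1 < ρ ∧ CondA f R ρ := by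
  set m := ‖f.p.leadingCoeff‖ with hm'
  have hp0 : f.p ≠ 0 := by
    intro h
    have := f.hdeg
    rw [h] at this
    simp at this
  have hm : 0 < m := norm_pos_iff.mpr (Polynomial.leadingCoeff_ne_zero.mpr hp0)
  set S := ∑ i ∈ Finset.range f.p.natDegree, ‖f.p.coeff i‖ with hS'
  have hS : 0 ≤ S := Finset.sum_nonneg fun i _ => norm_nonneg _
  have hδn : (0:ℝ) < ‖f.δ‖ := norm_pos_iff.mpr f.hδ
  set L := 7 * ‖f.δ‖ + 5 with hL'
  have hL : 5 ≤ L := by linarith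
  set T := (S + L) / m + 1 with hT'
  have hq : 0 < (S + L) / m := div_pos (by linarith) hm
  have hT1 : 1 < T := by rw [hT']; linarith
  have hmT : S + L ≤ m * T := by
    have h0 : m * ((S + L) / m) = S + L := mul_div_cancel₀ _ (ne_of_gt hm)
    have : m * T = S + L + m := by rw [hT']; rw [mul_add, h0]; ring
    linarith
  clear hq
  clear_value m S L T
  refine ⟨2 * (T + ‖f.a‖ + 1), by nlinarith [norm_nonneg f.a], fun R hR => ⟨2, one_lt_two, ?_, ?_⟩⟩
  · -- forward part
    intro z hz
    have hcl : closure (VPlus R) ⊆ {w : ℂ × ℂ | max R ‖w.1‖ ≤ ‖w.2‖} :=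
      closure_minimal (fun w hw => le_of_lt (show max R ‖w.1‖ < ‖w.2‖ from hw))
        (isClosed_le (continuous_const.max (continuous_norm.comp continuous_fst))
          (continuous_norm.comp continuous_snd))
    have hz' := hcl hz
    simp only [Set.mem_setOf_eq, max_le_iff] at hz'
    obtain ⟨hyR, hxy⟩ := hz'
    have ha2 : ‖f.a‖ ≤ R / 2 := by linarith [norm_nonneg f.a]
    have hTR : T ≤ R / 2 := by linarith [norm_nonneg f.a]
    have hy1 : 1 ≤ ‖z.2‖ := by linarith
    have hyT : T ≤ ‖z.2‖ := by linarith
    have hply : L * ‖z.2‖ ≤ ‖f.p.eval z.2‖ :=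
      poly_lower f.p f.hdeg L (by linarith) z.2 hy1
        (by rw [← hS', ← hm']; exact le_trans hmT (mul_le_mul_of_nonneg_left hyT hm.le))
    have hδx : ‖f.δ * z.1‖ ≤ ‖f.δ‖ * ‖z.2‖ := by
      rw [norm_mul]
      exact mul_le_mul_of_nonneg_left hxy (norm_nonneg _)
    have hsub : ‖f.p.eval z.2‖ - ‖f.δ * z.1‖ ≤ ‖f.p.eval z.2 - f.δ * z.1‖ :=
      norm_sub_norm_le _ _
    have key : 3 * ‖z.2‖ ≤ ‖f.p.eval z.2 - f.δ * z.1‖ := by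
      nlinarith [mul_nonneg hδn.le (norm_nonneg z.2)]
    have hy0 : 0 < ‖z.2‖ := by linarith
    have haley : ‖f.a‖ ≤ ‖z.2‖ := by linarith
    constructor
    · show max R ‖z.2 + f.a‖ < ‖f.p.eval z.2 - f.δ * z.1‖
      refine max_lt (by linarith) ?_
      have := norm_add_le z.2 f.a
      linarith
    · show (2:ℝ) * ‖z.2‖ < ‖f.p.eval z.2 - f.δ * z.1‖
      linarith
  · -- backward part
    intro z hz
    have hcl : closure (VMinus R) ⊆ {w : ℂ × ℂ | max R ‖w.2‖ ≤ ‖w.1‖} :=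
      closure_minimal (fun w hw => le_of_lt (show max R ‖w.2‖ < ‖w.1‖ from hw))
        (isClosed_le (continuous_const.max (continuous_norm.comp continuous_snd))
          (continuous_norm.comp continuous_fst))
    have hz' := hcl hz
    simp only [Set.mem_setOf_eq, max_le_iff] at hz'
    obtain ⟨hxR, hyx⟩ := hz'
    have ha2 : ‖f.a‖ ≤ R / 2 := by linarith [norm_nonneg f.a]
    have hTR : T ≤ R / 2 := by linarith [norm_nonneg f.a]
    set w := z.1 - f.a with hw'
    clear_value w
    have hwlow : ‖z.1‖ / 2 ≤ ‖w‖ := by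
      have h := norm_sub_norm_le z.1 f.a
      have : ‖f.a‖ ≤ ‖z.1‖ / 2 := by linarith
      rw [hw']
      linarith
    have hw1 : 1 ≤ ‖w‖ := by linarith
    have hwT : T ≤ ‖w‖ := by linarith
    have hplw : L * ‖w‖ ≤ ‖f.p.eval w‖ :=
      poly_lower f.p f.hdeg L (by linarith) w hw1
        (by rw [← hS', ← hm']; exact le_trans hmT (mul_le_mul_of_nonneg_left hwT hm.le))
    have hy2w : ‖z.2‖ ≤ 2 * ‖w‖ := by linarith
    have hsub : ‖f.p.eval w‖ - ‖z.2‖ ≤ ‖f.p.eval w - z.2‖ := norm_sub_norm_le _ _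
    have h7 : 6 * (‖f.δ‖ * ‖w‖) ≤ ‖f.p.eval w - z.2‖ := by
      nlinarith [norm_nonneg w]
    have key2 : 3 * ‖z.1‖ ≤ ‖f.δ⁻¹ * (f.p.eval w - z.2)‖ := by
      rw [norm_mul, norm_inv]
      have e2 : ‖f.δ‖⁻¹ * (6 * (‖f.δ‖ * ‖w‖)) = 6 * ‖w‖ := by
        rw [show ‖f.δ‖⁻¹ * (6 * (‖f.δ‖ * ‖w‖)) = ‖f.δ‖⁻¹ * ‖f.δ‖ * (6 * ‖w‖) by ring,
          inv_mul_cancel₀ (ne_of_gt hδn), one_mul]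
      have h8 : 6 * ‖w‖ ≤ ‖f.δ‖⁻¹ * ‖f.p.eval w - z.2‖ := by
        rw [← e2]
        exact mul_le_mul_of_nonneg_left h7 (inv_nonneg.mpr hδn.le)
      linarith
    have hx0 : 0 < ‖z.1‖ := by linarith
    have halex : ‖f.a‖ ≤ ‖z.1‖ := by linarith
    constructor
    · show max R ‖z.1 - f.a‖ < ‖f.δ⁻¹ * (f.p.eval (z.1 - f.a) - z.2)‖
      simp only [← hw']
      refine max_lt (by linarith) ?_
      have := norm_sub_le z.1 f.a
      rw [← hw'] at this
      linarith
    · show (2:ℝ) * ‖z.1‖ < ‖f.δ⁻¹ * (f.p.eval (z.1 - f.a) - z.2)‖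
      simp only [← hw']
      linarith
end
end

section
/- Let Γ be a nonempty parameter-bounded family of Hénon-form maps. Then there exists R₀ > 1 such that for every R ≥ R₀ there exists ρ > 1 such that every g ∈ Γ satisfies condition (A) for (R, ρ). -/
open Complex Filter Set Topology MeasureTheory Bornology

noncomputable section

lemma poly_lower_s2 (p : Polynomial ℂ) (m M : ℝ) (hm : 0 < m)
    (hM : ∀ i, ‖p.coeff i‖ ≤ M)
    (hlc : m ≤ ‖p.leadingCoeff‖) (y : ℂ) (hy : 1 ≤ ‖y‖) :
    m * ‖y‖ ^ p.natDegree
      - p.natDegree * M * ‖y‖ ^ (p.natDegree - 1)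
      ≤ ‖p.eval y‖ := by
  set n := p.natDegree with hn
  have he : p.eval y = p.coeff n * y ^ n + ∑ i ∈ Finset.range n, p.coeff i * y ^ i := by
    rw [Polynomial.eval_eq_sum_range, Finset.sum_range_succ]; ring
  have h2 : ‖∑ i ∈ Finset.range n, p.coeff i * y ^ i‖
      ≤ n * M * ‖y‖ ^ (n - 1) := by
    calc ‖∑ i ∈ Finset.range n, p.coeff i * y ^ i‖
        ≤ ∑ i ∈ Finset.range n, ‖p.coeff i * y ^ i‖ :=
          norm_sum_le _ _
      _ ≤ ∑ i ∈ Finset.range n, M * ‖y‖ ^ (n - 1) := by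
          apply Finset.sum_le_sum
          intro i hi
          have hi' := Finset.mem_range.mp hi
          rw [norm_mul, norm_pow]
          apply mul_le_mul (hM i) (pow_le_pow_right₀ hy (by omega : i ≤ n - 1))
            (by positivity) ((norm_nonneg _).trans (hM 0))
      _ = n * M * ‖y‖ ^ (n - 1) := by
          rw [Finset.sum_const, Finset.card_range]; ring
  have h1 : m * ‖y‖ ^ n ≤ ‖p.coeff n * y ^ n‖ := by
    rw [norm_mul, norm_pow]
    apply mul_le_mul_of_nonneg_right _ (by positivity)
    exact hlc.trans_eq (by rw [Polynomial.leadingCoeff])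
  calc m * ‖y‖ ^ n - n * M * ‖y‖ ^ (n - 1)
      ≤ ‖p.coeff n * y ^ n‖
        - ‖∑ i ∈ Finset.range n, p.coeff i * y ^ i‖ := by linarith
    _ ≤ ‖p.coeff n * y ^ n + ∑ i ∈ Finset.range n, p.coeff i * y ^ i‖ := by
        have := norm_sub_norm_le (p.coeff n * y ^ n)
          (-(∑ i ∈ Finset.range n, p.coeff i * y ^ i))
        simp only [sub_neg_eq_add, norm_neg] at this
        linarith
    _ = ‖p.eval y‖ := by rw [he]

lemma eval_lower (p : Polynomial ℂ) (m M : ℝ) (D : ℕ) (hm : 0 < m)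
    (hdeg : 2 ≤ p.natDegree) (hD : p.natDegree ≤ D)
    (hM : ∀ i, ‖p.coeff i‖ ≤ M)
    (hlc : m ≤ ‖p.leadingCoeff‖) (y : ℂ) (hy : 1 ≤ ‖y‖)
    (hbig : M * D ≤ m * ‖y‖) :
    ‖y‖ * (m * ‖y‖ - M * D) ≤ ‖p.eval y‖ := by
  have hpl := poly_lower_s2 p m M hm hM hlc y hy
  set s := ‖y‖ with hs
  set n := p.natDegree with hn
  obtain ⟨k, hk⟩ : ∃ k, n = k + 1 := ⟨n - 1, by omega⟩
  have hk1 : 1 ≤ k := by omega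
  have hs0 : 0 ≤ s := by positivity
  have hsk : s ≤ s ^ k := by
    calc s = s ^ 1 := (pow_one s).symm
    _ ≤ s ^ k := pow_le_pow_right₀ hy hk1
  have hnM : (n : ℝ) * M ≤ M * D := by
    have hM0 : 0 ≤ M := (norm_nonneg _).trans (hM 0)
    have : (n : ℝ) ≤ (D : ℝ) := by exact_mod_cast hD
    nlinarith
  have key : s * (m * s - M * D) ≤ m * s ^ n - n * M * s ^ (n - 1) := by
    have h1 : s * (m * s - M * D) ≤ s ^ k * (m * s - M * D) := by
      rcases le_or_gt 0 (m * s - M * D) with h | h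
      · exact mul_le_mul_of_nonneg_right hsk h
      · nlinarith
    have h2 : s ^ k * (m * s - M * D) ≤ s ^ k * (m * s - n * M) := by
      apply mul_le_mul_of_nonneg_left (by linarith) (by positivity)
    have h3 : s ^ k * (m * s - n * M) = m * s ^ n - n * M * s ^ (n - 1) := by
      rw [hk]
      simp only [Nat.add_sub_cancel]
      ring
    linarith
  linarith

lemma closure_VPlus' (R : ℝ) :
    closure {z : ℂ × ℂ | max R (‖z.1‖) < ‖z.2‖}
      ⊆ {z : ℂ × ℂ | max R (‖z.1‖) ≤ ‖z.2‖} := by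
  refine closure_minimal ?_ (isClosed_le (Continuous.max continuous_const
      (continuous_norm.comp continuous_fst))
      (continuous_norm.comp continuous_snd))
  intro z hz
  simp only [Set.mem_setOf_eq] at hz ⊢
  exact hz.le

lemma closure_VMinus' (R : ℝ) :
    closure {z : ℂ × ℂ | max R (‖z.2‖) < ‖z.1‖}
      ⊆ {z : ℂ × ℂ | max R (‖z.2‖) ≤ ‖z.1‖} := by
  refine closure_minimal ?_ (isClosed_le (Continuous.max continuous_const
      (continuous_norm.comp continuous_snd))
      (continuous_norm.comp continuous_fst))
  intro z hz
  simp only [Set.mem_setOf_eq] at hz ⊢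
  exact hz.le

set_option maxHeartbeats 2000000 in
/-- uniform condition (A) for a nonempty parameter-bounded family. -/
theorem stmt_2 (Γ : Set HenonMap) (hne : Γ.Nonempty) (hΓ : ParamBounded Γ) :
    ∃ R₀ : ℝ, 1 < R₀ ∧ ∀ R : ℝ, R₀ ≤ R → ∃ ρ : ℝ, 1 < ρ ∧ ∀ g ∈ Γ, CondA g R ρ := by
  obtain ⟨D, A, d₀, Δ, m, M, hD2, hA, hd₀, hd₀Δ, hm, hmM, hbound⟩ := hΓ
  have hΔ : 0 < Δ := lt_of_lt_of_le hd₀ hd₀Δ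
  have hM0 : 0 < M := lt_of_lt_of_le hm hmM
  have hD0 : (2 : ℝ) ≤ (D : ℝ) := by exact_mod_cast hD2
  refine ⟨2 + 2 * A + (3 * M * D + 9 * Δ + 8) / m, ?_, ?_⟩
  · have h1 : 0 < (3 * M * D + 9 * Δ + 8) / m := by positivity
    linarith
  intro R hR
  -- basic facts about R
  have hmR : 3 * M * D + 9 * Δ + 8 + 2 * m + 2 * A * m ≤ m * R := by
    have h1 : m * ((3 * M * D + 9 * Δ + 8) / m) = 3 * M * D + 9 * Δ + 8 :=
      mul_div_cancel₀ _ hm.ne'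
    nlinarith [mul_le_mul_of_nonneg_left hR hm.le]
  have hMD : 0 ≤ M * D := by positivity
  have hR2 : 2 ≤ R := by
    have h1 : 0 < (3 * M * D + 9 * Δ + 8) / m := by positivity
    linarith
  have hRA : 2 * A ≤ R := by
    have h1 : 0 < (3 * M * D + 9 * Δ + 8) / m := by positivity
    linarith
  have hR0 : 0 < R := by linarith
  set ρ₁ : ℝ := m * R - M * D - Δ - 1 with hρ₁def
  set ρ₂ : ℝ := ((m * R / 2 - M * D) / 2 - 1) / Δ - 1 with hρ₂def
  have hρ₁ : 1 < ρ₁ := by nlinarith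
  have hΔρ₂ : Δ * (ρ₂ + 1) = (m * R / 2 - M * D) / 2 - 1 := by
    rw [hρ₂def]; field_simp; ring
  have hρ₂ : 1 < ρ₂ := by
    rw [hρ₂def, lt_sub_iff_add_lt, lt_div_iff₀ hΔ]
    nlinarith
  refine ⟨min ρ₁ ρ₂, lt_min hρ₁ hρ₂, ?_⟩
  intro g hg
  obtain ⟨hgD, hga, hgδ₁, hgδ₂, hgM, hglc⟩ := hbound g hg
  have hδpos : 0 < ‖g.δ‖ := lt_of_lt_of_le hd₀ hgδ₁
  constructor
  · -- forward
    intro z hz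
    have hz' := closure_VPlus' R hz
    simp only [Set.mem_setOf_eq, max_le_iff] at hz'
    obtain ⟨htR, hxy⟩ := hz'
    set t := ‖z.2‖ with htdef
    have ht0 : 0 < t := by linarith
    have ht1 : 1 ≤ t := by linarith
    have hbig : M * D ≤ m * t := by nlinarith
    have hpev := eval_lower g.p m M D hm g.hdeg hgD hgM hglc z.2 ht1 hbig
    have hsub : ‖g.p.leadingCoeff‖ ≤ M := by
      rw [Polynomial.leadingCoeff]; exact hgM _
    -- |p(y) - δ x| ≥ |p(y)| - Δ t
    have htri : ‖g.p.eval z.2‖ - Δ * t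
        ≤ ‖g.p.eval z.2 - g.δ * z.1‖ := by
      have h1 := norm_sub_norm_le (g.p.eval z.2) (g.δ * z.1)
      have h2 : ‖g.δ * z.1‖ ≤ Δ * t := by
        rw [norm_mul]
        exact mul_le_mul hgδ₂ hxy (norm_nonneg _) hΔ.le
      linarith
    have hkey : (ρ₁ + 1) * t ≤ ‖g.p.eval z.2 - g.δ * z.1‖ := by
      have h3 : (ρ₁ + 1) * t ≤ t * (m * t - M * D) - Δ * t := by
        have h4 : 0 ≤ t * (m * (t - R)) :=
          mul_nonneg ht0.le (mul_nonneg hm.le (by linarith))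
        rw [hρ₁def]; nlinarith
      linarith
    have hπ₂ : (g.toFun z).2 = g.p.eval z.2 - g.δ * z.1 := rfl
    have hπ₁ : (g.toFun z).1 = z.2 + g.a := rfl
    have habs1 : ‖(g.toFun z).1‖ ≤ t + A := by
      rw [hπ₁]
      calc ‖z.2 + g.a‖ ≤ ‖z.2‖ + ‖g.a‖ :=
        norm_add_le _ _
      _ ≤ t + A := by rw [← htdef]; linarith
    have hAt : A ≤ t / 2 := by linarith
    refine ⟨?_, ?_⟩
    · show max R (‖(g.toFun z).1‖) < ‖(g.toFun z).2‖
      rw [hπ₂]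
      apply max_lt
      · nlinarith
      · nlinarith
    · rw [hπ₂]
      have : min ρ₁ ρ₂ * t ≤ ρ₁ * t :=
        mul_le_mul_of_nonneg_right (min_le_left _ _) ht0.le
      nlinarith
  · -- backward
    intro z hz
    have hz' := closure_VMinus' R hz
    simp only [Set.mem_setOf_eq, max_le_iff] at hz'
    obtain ⟨htR, hxy⟩ := hz'
    set t := ‖z.1‖ with htdef
    have ht0 : 0 < t := by linarith
    have hAt : A ≤ t / 2 := by linarith
    set w := z.1 - g.a with hwdef
    have hwlb : t / 2 ≤ ‖w‖ := by
      have h1 : ‖z.1‖ ≤ ‖w‖ + ‖g.a‖ := by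
        calc ‖z.1‖ = ‖w + g.a‖ := by rw [hwdef]; ring_nf
        _ ≤ ‖w‖ + ‖g.a‖ := norm_add_le _ _
      linarith
    set s := ‖w‖ with hsdef
    have hs1 : 1 ≤ s := by linarith
    have hbig : M * D ≤ m * s := by nlinarith
    have hpev := eval_lower g.p m M D hm g.hdeg hgD hgM hglc w hs1 hbig
    rw [← hsdef] at hpev
    -- s (m s - MD) ≥ (t/2)(m t/2 - MD)
    have hmono : t / 2 * (m * (t / 2) - M * D) ≤ s * (m * s - M * D) := by
      have h1 : 0 ≤ m * (t / 2) - M * D := by nlinarith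
      nlinarith [mul_nonneg hm.le (sub_nonneg.2 hwlb)]
    -- |p(w) - y| ≥ |p(w)| - t
    have htri : ‖g.p.eval w‖ - t ≤ ‖g.p.eval w - z.2‖ := by
      have h1 := norm_sub_norm_le (g.p.eval w) z.2
      linarith
    have hYlb : Δ * ((ρ₂ + 1) * t) ≤ ‖g.p.eval w - z.2‖ := by
      have h2 : Δ * ((ρ₂ + 1) * t) ≤ t / 2 * (m * (t / 2) - M * D) - t := by
        have h3 : Δ * ((ρ₂ + 1) * t) = ((m * R / 2 - M * D) / 2 - 1) * t := by
          rw [← hΔρ₂]; ring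
        rw [h3]
        nlinarith [mul_nonneg ht0.le (mul_nonneg hm.le (sub_nonneg.2 htR))]
      ring_nf at h2 hmono hpev htri ⊢
      linarith [h2, hmono, hpev, htri]
    have hπ₁ : (g.invFun z).1 = g.δ⁻¹ * (g.p.eval w - z.2) := rfl
    have hπ₂ : (g.invFun z).2 = w := rfl
    have habsπ₁ : (ρ₂ + 1) * t ≤ ‖(g.invFun z).1‖ := by
      rw [hπ₁, norm_mul, norm_inv]
      have hY0 : 0 ≤ ‖g.p.eval w - z.2‖ := norm_nonneg _
      have h1 : Δ⁻¹ ≤ (‖g.δ‖)⁻¹ := by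
        apply inv_anti₀ hδpos hgδ₂
      calc (ρ₂ + 1) * t = Δ⁻¹ * (Δ * ((ρ₂ + 1) * t)) := by
            field_simp
      _ ≤ Δ⁻¹ * ‖g.p.eval w - z.2‖ :=
            mul_le_mul_of_nonneg_left hYlb (by positivity)
      _ ≤ (‖g.δ‖)⁻¹ * ‖g.p.eval w - z.2‖ :=
            mul_le_mul_of_nonneg_right h1 hY0
    have habsw : ‖(g.invFun z).2‖ ≤ t + A := by
      rw [hπ₂, hwdef]
      calc ‖z.1 - g.a‖ ≤ ‖z.1‖ + ‖g.a‖ := by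
            simpa using norm_sub_le z.1 g.a
      _ ≤ t + A := by rw [← htdef]; linarith
    refine ⟨?_, ?_⟩
    · show max R (‖(g.invFun z).2‖) < ‖(g.invFun z).1‖
      apply max_lt
      · nlinarith
      · nlinarith
    · have : min ρ₁ ρ₂ * t ≤ ρ₂ * t :=
        mul_le_mul_of_nonneg_right (min_le_right _ _) ht0.le
      nlinarith
end
end

section
/- Let Γ be a nonempty parameter-bounded family of Hénon-form maps. Then there exists R₀ > 1 such that for every R ≥ R₀ the following holds: for every (x,y) ∈ ℂ² and every sequence γ = (γ_j)_{j∈ℤ} with all γ_j ∈ Γ, there exists n₀ ∈ ℕ such that for every n ≥ n₀ one has γ_{n−1}∘⋯∘γ₀(x,y) ∈ W_R⁺ and γ_{−n}⁻¹∘⋯∘γ_{−1}⁻¹(x,y) ∈ W_R⁻, where W_R⁺ = ℂ² ∖ closure(V_R⁻) and W_R⁻ = ℂ² ∖ closure(V_R⁺). -/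
open Complex Filter Set Topology MeasureTheory Bornology

noncomputable section

-- AUX

lemma pLower (D : ℕ) (m M : ℝ) (p : Polynomial ℂ)
    (h2 : 2 ≤ p.natDegree) (hD : p.natDegree ≤ D)
    (hm : m ≤ ‖p.leadingCoeff‖)
    (hM : ∀ i, ‖(p.coeff i)‖ ≤ M)
    (hm0 : 0 < m) (y : ℂ) (hy1 : 1 ≤ ‖y‖)
    (hy2 : 2 * D * M ≤ m * ‖y‖) :
    m / 2 * ‖y‖ ^ 2 ≤ ‖(p.eval y)‖ := by
  obtain ⟨k, hk⟩ : ∃ k, p.natDegree = k + 2 := ⟨p.natDegree - 2, by omega⟩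
  set t := ‖y‖ with ht
  have ht0 : (0:ℝ) < t := lt_of_lt_of_le one_pos hy1
  have hM0 : 0 ≤ M := le_trans (norm_nonneg _) (hM 0)
  have hev : p.eval y = (∑ i ∈ Finset.range (k + 2), p.coeff i * y ^ i)
      + p.coeff p.natDegree * y ^ p.natDegree := by
    rw [Polynomial.eval_eq_sum_range, hk, Finset.sum_range_succ, ← hk]
  have htail : ‖(∑ i ∈ Finset.range (k + 2), p.coeff i * y ^ i)‖
      ≤ (k + 2) * (M * t ^ (k + 1)) := by
    calc ‖(∑ i ∈ Finset.range (k + 2), p.coeff i * y ^ i)‖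
        ≤ ∑ i ∈ Finset.range (k + 2), ‖(p.coeff i * y ^ i)‖ :=
          norm_sum_le _ _
      _ ≤ ∑ _i ∈ Finset.range (k + 2), M * t ^ (k + 1) := by
          apply Finset.sum_le_sum
          intro i hi
          rw [norm_mul, norm_pow]
          exact mul_le_mul (hM i) (pow_le_pow_right₀ hy1 (by
            simp only [Finset.mem_range] at hi; omega)) (by positivity) hM0
      _ = (k + 2) * (M * t ^ (k + 1)) := by
          rw [Finset.sum_const, Finset.card_range]; ring
  have hhead : m * t ^ (k + 2) ≤ ‖(p.coeff p.natDegree * y ^ p.natDegree)‖ := by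
    rw [norm_mul, norm_pow, ← hk]
    have : m ≤ ‖(p.coeff p.natDegree)‖ := by
      rwa [← Polynomial.leadingCoeff]
    exact mul_le_mul this le_rfl (by positivity) (le_trans hm0.le this)
  have hlow : m * t ^ (k + 2) - (k + 2) * (M * t ^ (k + 1)) ≤ ‖(p.eval y)‖ := by
    rw [hev]
    have hb : ‖(p.coeff p.natDegree * y ^ p.natDegree)‖
        ≤ ‖((∑ i ∈ Finset.range (k + 2), p.coeff i * y ^ i)
            + p.coeff p.natDegree * y ^ p.natDegree)‖
          + ‖(∑ i ∈ Finset.range (k + 2), p.coeff i * y ^ i)‖ := by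
      have := norm_add_le ((∑ i ∈ Finset.range (k + 2), p.coeff i * y ^ i)
        + p.coeff p.natDegree * y ^ p.natDegree)
        (-(∑ i ∈ Finset.range (k + 2), p.coeff i * y ^ i))
      simpa using this
    linarith
  have hu1 : (1:ℝ) ≤ t ^ k := one_le_pow₀ hy1
  have hkD : ((k:ℝ) + 2) ≤ D := by exact_mod_cast hk ▸ hD
  have e1 : t ^ (k+1) = t ^ k * t := by ring
  have e2 : t ^ (k+2) = t ^ k * t^2 := by ring
  rw [e1, e2] at hlow
  nlinarith [mul_le_mul_of_nonneg_right hy2 (mul_nonneg (pow_nonneg ht0.le k) ht0.le),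
    mul_le_mul_of_nonneg_right hkD (mul_nonneg hM0 (mul_nonneg (mul_nonneg (pow_nonneg ht0.le k) ht0.le) ht0.le)),
    mul_le_mul_of_nonneg_right hu1 (mul_nonneg hm0.le (sq_nonneg t))]

lemma hkey_of_hR (D : ℕ) (A Δ m M R : ℝ) (hm0 : 0 < m)
    (hR : 2 + 3 * A + (2 * D * M + 8 * Δ + 12) / m ≤ R) :
    2 * D * M + 8 * Δ + 12 ≤ m * (R - 2 - 3 * A) := by
  have h1 : (2 * (D:ℝ) * M + 8 * Δ + 12) / m ≤ R - 2 - 3 * A := by linarith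
  calc (2*(D:ℝ)*M + 8*Δ+12) = ((2*(D:ℝ)*M+8*Δ+12)/m)*m := by field_simp
  _ ≤ (R-2-3*A)*m := mul_le_mul_of_nonneg_right h1 hm0.le
  _ = m*(R-2-3*A) := by ring

lemma fwd_inv (D : ℕ) (A Δ m M R : ℝ) (f : HenonMap)
    (hD : f.p.natDegree ≤ D) (ha : ‖f.a‖ ≤ A) (hδ : ‖f.δ‖ ≤ Δ)
    (hM : ∀ i, ‖(f.p.coeff i)‖ ≤ M) (hm : m ≤ ‖f.p.leadingCoeff‖)
    (hm0 : 0 < m) (hA : 0 ≤ A)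
    (hR : 2 + 3 * A + (2 * D * M + 8 * Δ + 12) / m ≤ R)
    (z : ℂ × ℂ) (hz : ‖z.1‖ < max R (‖z.2‖)) :
    ‖(f.toFun z).1‖ < max R (‖(f.toFun z).2‖) := by
  have hM0 : 0 ≤ M := le_trans (norm_nonneg _) (hM 0)
  have hΔ0 : (0:ℝ) < Δ := lt_of_lt_of_le (norm_pos_iff.mpr f.hδ) hδ
  have hDM : 0 ≤ 2 * (D:ℝ) * M := by positivity
  have hkey := hkey_of_hR D A Δ m M R hm0 hR
  have hx' : ‖(f.toFun z).1‖ ≤ ‖z.2‖ + A := by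
    calc ‖(z.2 + f.a)‖ ≤ ‖z.2‖ + ‖f.a‖ := norm_add_le _ _
    _ ≤ _ := by linarith
  by_cases hy : ‖z.2‖ < R - A
  · exact lt_max_of_lt_left (by linarith)
  · push_neg at hy
    set t := ‖z.2‖ with htdef
    have hRA : 2 + 2*A ≤ R - A := by nlinarith
    have ht1 : (1:ℝ) ≤ t := by linarith
    have hmRA : 2 * D * M + 8 * Δ + 12 ≤ m * t := by nlinarith
    have hplow : m / 2 * t ^ 2 ≤ ‖(f.p.eval z.2)‖ :=
      pLower D m M f.p f.hdeg hD hm hM hm0 z.2 ht1 (by nlinarith)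
    have hxlt : ‖z.1‖ ≤ t + A := le_of_lt (lt_of_lt_of_le hz (max_le (by linarith) (by linarith)))
    have hy' : m / 2 * t ^ 2 - Δ * (t + A) ≤ ‖(f.toFun z).2‖ := by
      have h1 : ‖(f.p.eval z.2)‖
          ≤ ‖(f.toFun z).2‖ + ‖f.δ‖ * ‖z.1‖ := by
        have he : f.p.eval z.2 = (f.p.eval z.2 - f.δ * z.1) + f.δ * z.1 := by ring
        calc ‖(f.p.eval z.2)‖
            = ‖((f.p.eval z.2 - f.δ * z.1) + f.δ * z.1)‖ := by rw [← he]
        _ ≤ ‖(f.p.eval z.2 - f.δ * z.1)‖ + ‖(f.δ * z.1)‖ :=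
            norm_add_le _ _
        _ = ‖(f.toFun z).2‖ + ‖f.δ‖ * ‖z.1‖ := by
            rw [norm_mul]; rfl
      have h2 : ‖f.δ‖ * ‖z.1‖ ≤ Δ * (t + A) :=
        mul_le_mul hδ hxlt (norm_nonneg _) hΔ0.le
      linarith
    have hAt : A ≤ t := by linarith
    have hmt : 8 * Δ + 12 ≤ m * t := by nlinarith
    refine lt_max_of_lt_right ?_
    have ht0 : (0:ℝ) ≤ t := by linarith
    nlinarith [mul_le_mul_of_nonneg_right hmt ht0]

lemma bwd_inv (D : ℕ) (A Δ m M R : ℝ) (f : HenonMap)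
    (hD : f.p.natDegree ≤ D) (ha : ‖f.a‖ ≤ A) (hδ : ‖f.δ‖ ≤ Δ)
    (hM : ∀ i, ‖(f.p.coeff i)‖ ≤ M) (hm : m ≤ ‖f.p.leadingCoeff‖)
    (hm0 : 0 < m) (hA : 0 ≤ A)
    (hR : 2 + 3 * A + (2 * D * M + 8 * Δ + 12) / m ≤ R)
    (z : ℂ × ℂ) (hz : ‖z.2‖ < max R (‖z.1‖)) :
    ‖(f.invFun z).2‖ < max R (‖(f.invFun z).1‖) := by
  have hM0 : 0 ≤ M := le_trans (norm_nonneg _) (hM 0)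
  have hΔ0 : (0:ℝ) < Δ := lt_of_lt_of_le (norm_pos_iff.mpr f.hδ) hδ
  have hDM : 0 ≤ 2 * (D:ℝ) * M := by positivity
  have hkey := hkey_of_hR D A Δ m M R hm0 hR
  have hy'le : ‖(f.invFun z).2‖ ≤ ‖z.1‖ + A := by
    have he : z.1 - f.a = z.1 + (-f.a) := by ring
    calc ‖(z.1 - f.a)‖ ≤ ‖z.1‖ + ‖(-f.a)‖ := by
          rw [he]; exact norm_add_le _ _
    _ ≤ _ := by rw [norm_neg]; linarith
  by_cases hx : ‖z.1‖ < R - A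
  · exact lt_max_of_lt_left (by linarith)
  · push_neg at hx
    set u := z.1 - f.a with hu
    set tu := ‖u‖ with htu
    have hDMm0 : 0 ≤ (2 * (D:ℝ) * M + 8 * Δ + 12) / m := by positivity
    have htuge : ‖z.1‖ - A ≤ tu := by
      have : ‖z.1‖ ≤ tu + ‖f.a‖ := by
        calc ‖z.1‖ = ‖(u + f.a)‖ := by rw [hu]; ring_nf
        _ ≤ _ := norm_add_le _ _
      linarith
    have htu2A : R - 2*A ≤ tu := by linarith
    have htu1 : (1:ℝ) ≤ tu := by linarith
    have hAtu : A ≤ tu := by linarith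
    have hmtu : 2 * D * M + 8 * Δ + 12 ≤ m * tu := by nlinarith
    have hplow : m / 2 * tu ^ 2 ≤ ‖(f.p.eval u)‖ :=
      pLower D m M f.p f.hdeg hD hm hM hm0 u htu1 (by nlinarith)
    have hzb : ‖z.2‖ ≤ 3 * tu := by
      have h1 : max R (‖z.1‖) ≤ ‖z.1‖ + A := max_le (by linarith) (by linarith)
      have h2 := le_of_lt (lt_of_lt_of_le hz h1)
      linarith
    have hpe : ‖(f.p.eval u)‖ ≤ Δ * ‖(f.invFun z).1‖ + 3 * tu := by
      have he : f.δ * (f.δ⁻¹ * (f.p.eval u - z.2)) + z.2 = f.p.eval u := by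
        rw [← mul_assoc, mul_inv_cancel₀ f.hδ, one_mul]; ring
      calc ‖(f.p.eval u)‖
          = ‖(f.δ * (f.δ⁻¹ * (f.p.eval u - z.2)) + z.2)‖ := by rw [he]
      _ ≤ ‖(f.δ * (f.δ⁻¹ * (f.p.eval u - z.2)))‖ + ‖z.2‖ :=
          norm_add_le _ _
      _ = ‖f.δ‖ * ‖(f.invFun z).1‖ + ‖z.2‖ := by
          rw [norm_mul]; rfl
      _ ≤ _ := by
          have := mul_le_mul_of_nonneg_right hδ (norm_nonneg (f.invFun z).1)
          linarith
    have hxgt : tu < ‖(f.invFun z).1‖ := by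
      have h1 : Δ * tu < Δ * ‖(f.invFun z).1‖ := by nlinarith
      exact lt_of_mul_lt_mul_left h1 hΔ0.le
    exact lt_max_of_lt_right hxgt

lemma half_pow_small (c : ℝ) : ∃ n : ℕ, (1/2:ℝ)^n * c < 2 := by
  obtain ⟨n, hn⟩ := exists_pow_lt_of_lt_one (show (0:ℝ) < 2/(|c|+1) by positivity)
    (by norm_num : (1:ℝ)/2 < 1)
  refine ⟨n, ?_⟩
  have h1 : (1/2:ℝ)^n * c ≤ (1/2:ℝ)^n * (|c|+1) :=
    mul_le_mul_of_nonneg_left (by linarith [le_abs_self c]) (by positivity)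
  have h2 : (1/2:ℝ)^n * (|c|+1) < 2 := (lt_div_iff₀ (by positivity)).mp hn
  linarith

lemma fwd_escape (D : ℕ) (A Δ m M R : ℝ) (γ : ℤ → HenonMap)
    (hb : ∀ j : ℤ, (γ j).p.natDegree ≤ D ∧ ‖((γ j).a)‖ ≤ A ∧
      ‖((γ j).δ)‖ ≤ Δ ∧ (∀ i, ‖((γ j).p.coeff i)‖ ≤ M) ∧
      m ≤ ‖((γ j).p.leadingCoeff)‖)
    (hm0 : 0 < m) (hA : 0 ≤ A)
    (hR : 2 + 3 * A + (2 * D * M + 8 * Δ + 12) / m ≤ R)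
    (z : ℂ × ℂ) :
    ∃ k, ‖(fwd γ k z).1‖ < max R (‖(fwd γ k z).2‖) := by
  by_contra hcon
  push_neg at hcon
  set t : ℕ → ℝ := fun n => ‖(fwd γ n z).2‖ with htdef
  have ht0 : ∀ n, 0 ≤ t n := fun n => norm_nonneg _
  have hM0 : 0 ≤ M := le_trans (norm_nonneg _) ((hb 0).2.2.2.1 0)
  have hΔ0 : (0:ℝ) < Δ := lt_of_lt_of_le (norm_pos_iff.mpr (γ 0).hδ) (hb 0).2.2.1
  have hDM : 0 ≤ 2 * (D:ℝ) * M := by positivity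
  have hkey := hkey_of_hR D A Δ m M R hm0 hR
  have hRge : 2 + 3 * A ≤ R := by nlinarith
  have hxle : ∀ n : ℕ, ‖(fwd γ (n+1) z).1‖ ≤ t n + A := by
    intro n
    have hba := (hb (n:ℤ)).2.1
    calc ‖(fwd γ (n+1) z).1‖
        = ‖((fwd γ n z).2 + (γ (n:ℤ)).a)‖ := rfl
    _ ≤ ‖(fwd γ n z).2‖ + ‖((γ (n:ℤ)).a)‖ := norm_add_le _ _
    _ ≤ t n + A := by exact add_le_add le_rfl hba
  have h1 : ∀ n, R - A ≤ t n := by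
    intro n
    have := le_trans (le_max_left R (t (n+1))) (le_trans (hcon (n+1)) (hxle n))
    linarith
  have h2 : ∀ n, t (n+1) ≤ t n + A := by
    intro n
    exact le_trans (le_trans (le_max_right R (t (n+1))) (hcon (n+1))) (hxle n)
  have hmt : ∀ n, 2 * D * M + 8 * Δ + 12 ≤ m * t n := by
    intro n
    have := h1 n
    nlinarith
  have h3 : ∀ n, m / 2 * t (n+1) ^ 2 ≤ (t (n+1) + A) + Δ * (t n + A) := by
    intro n
    have hbn := hb ((n+1 : ℕ) : ℤ)
    have ht1 : (1:ℝ) ≤ t (n+1) := by have := h1 (n+1); linarith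
    have hp := pLower D m M (γ ((n+1:ℕ):ℤ)).p (γ ((n+1:ℕ):ℤ)).hdeg hbn.1
      hbn.2.2.2.2 hbn.2.2.2.1 hm0 (fwd γ (n+1) z).2 ht1 (by have := hmt (n+1); nlinarith)
    have hup : ‖((γ ((n+1:ℕ):ℤ)).p.eval (fwd γ (n+1) z).2)‖
        ≤ t (n+2) + Δ * ‖(fwd γ (n+1) z).1‖ := by
      set f := γ ((n+1:ℕ):ℤ) with hf
      set w := fwd γ (n+1) z with hw
      have he : f.p.eval w.2 = (f.p.eval w.2 - f.δ * w.1) + f.δ * w.1 := by ring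
      have hc : ‖(f.p.eval w.2)‖
          ≤ ‖(f.p.eval w.2 - f.δ * w.1)‖ + ‖f.δ‖ * ‖w.1‖ := by
        calc ‖(f.p.eval w.2)‖
            = ‖((f.p.eval w.2 - f.δ * w.1) + f.δ * w.1)‖ := by rw [← he]
        _ ≤ ‖(f.p.eval w.2 - f.δ * w.1)‖ + ‖(f.δ * w.1)‖ :=
            norm_add_le _ _
        _ = _ := by rw [norm_mul]
      have heq : ‖(f.p.eval w.2 - f.δ * w.1)‖ = t (n+2) := rfl
      have hδw : ‖f.δ‖ * ‖w.1‖ ≤ Δ * ‖w.1‖ :=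
        mul_le_mul_of_nonneg_right hbn.2.2.1 (norm_nonneg _)
      rw [heq] at hc
      linarith
    have hxb : ‖(fwd γ (n+1) z).1‖ ≤ t n + A := hxle n
    have ht2 : t (n+2) ≤ t (n+1) + A := h2 (n+1)
    nlinarith [mul_le_mul_of_nonneg_left hxb hΔ0.le]
  have h4 : ∀ n, t (n+1) ≤ t n / 2 := by
    intro n
    have hAt : A ≤ t n := by have := h1 n; linarith
    have h3n := h3 n
    have hmtn := hmt (n+1)
    nlinarith [mul_le_mul_of_nonneg_right hmtn (ht0 (n+1)), ht0 n, ht0 (n+1), hΔ0]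
  have h5 : ∀ n, t n ≤ (1/2:ℝ)^n * t 0 := by
    intro n
    induction n with
    | zero => norm_num
    | succ k ih =>
      have := h4 k
      have h6 : t k / 2 ≤ ((1/2:ℝ)^k * t 0) / 2 := by linarith
      calc t (k+1) ≤ t k / 2 := h4 k
      _ ≤ ((1/2:ℝ)^k * t 0) / 2 := h6
      _ = (1/2:ℝ)^(k+1) * t 0 := by ring
  obtain ⟨n, hn⟩ := half_pow_small (t 0)
  have := h1 n
  have := h5 n
  linarith

lemma bwd_escape (D : ℕ) (A Δ m M R : ℝ) (γ : ℤ → HenonMap)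
    (hb : ∀ j : ℤ, (γ j).p.natDegree ≤ D ∧ ‖((γ j).a)‖ ≤ A ∧
      ‖((γ j).δ)‖ ≤ Δ ∧ (∀ i, ‖((γ j).p.coeff i)‖ ≤ M) ∧
      m ≤ ‖((γ j).p.leadingCoeff)‖)
    (hm0 : 0 < m) (hA : 0 ≤ A)
    (hR : 2 + 3 * A + (2 * D * M + 8 * Δ + 12) / m ≤ R)
    (z : ℂ × ℂ) :
    ∃ k, ‖(bwd γ k z).2‖ < max R (‖(bwd γ k z).1‖) := by
  by_contra hcon
  push_neg at hcon
  set t : ℕ → ℝ := fun n => ‖(bwd γ n z).2‖ with htdef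
  have ht0 : ∀ n, 0 ≤ t n := fun n => norm_nonneg _
  have hM0 : 0 ≤ M := le_trans (norm_nonneg _) ((hb 0).2.2.2.1 0)
  have hΔ0 : (0:ℝ) < Δ := lt_of_lt_of_le (norm_pos_iff.mpr (γ 0).hδ) (hb 0).2.2.1
  have hDM : 0 ≤ 2 * (D:ℝ) * M := by positivity
  have hkey := hkey_of_hR D A Δ m M R hm0 hR
  have hRge : 2 + 3 * A ≤ R := by nlinarith
  have h1 : ∀ n, R ≤ t n := fun n => le_trans (le_max_left _ _) (hcon n)
  have hx : ∀ n, ‖(bwd γ n z).1‖ ≤ t n :=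
    fun n => le_trans (le_max_right _ _) (hcon n)
  have h2 : ∀ n, t (n+1) ≤ t n + A := by
    intro n
    have hba := (hb (-((n:ℤ)+1))).2.1
    calc t (n+1) = ‖((bwd γ n z).1 - (γ (-((n:ℤ)+1))).a)‖ := rfl
    _ = ‖((bwd γ n z).1 + -((γ (-((n:ℤ)+1))).a))‖ := by ring_nf
    _ ≤ ‖(bwd γ n z).1‖ + ‖(-((γ (-((n:ℤ)+1))).a))‖ := norm_add_le _ _
    _ ≤ t n + A := by rw [norm_neg]; exact add_le_add (hx n) hba
  have hmt : ∀ n, 2 * D * M + 8 * Δ + 12 ≤ m * t n := by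
    intro n
    have := h1 n
    nlinarith
  have h3 : ∀ n, m / 2 * t (n+1) ^ 2 ≤ Δ * t (n+1) + t n := by
    intro n
    set f := γ (-((n:ℤ)+1)) with hf
    have hbn := hb (-((n:ℤ)+1))
    have ht1 : (1:ℝ) ≤ t (n+1) := by have := h1 (n+1); linarith
    have hp := pLower D m M f.p f.hdeg hbn.1 hbn.2.2.2.2 hbn.2.2.2.1 hm0
      (bwd γ (n+1) z).2 ht1 (by have := hmt (n+1); nlinarith)
    have hup : ‖(f.p.eval (bwd γ (n+1) z).2)‖
        ≤ Δ * ‖(bwd γ (n+1) z).1‖ + t n := by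
      set w := bwd γ n z with hw
      have hee : (bwd γ (n+1) z).2 = w.1 - f.a := rfl
      have hex : (bwd γ (n+1) z).1 = f.δ⁻¹ * (f.p.eval (w.1 - f.a) - w.2) := rfl
      have he : f.δ * (f.δ⁻¹ * (f.p.eval (w.1 - f.a) - w.2)) + w.2
          = f.p.eval (w.1 - f.a) := by
        rw [← mul_assoc, mul_inv_cancel₀ f.hδ, one_mul]; ring
      calc ‖(f.p.eval (bwd γ (n+1) z).2)‖
          = ‖(f.δ * (f.δ⁻¹ * (f.p.eval (w.1 - f.a) - w.2)) + w.2)‖ := by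
            rw [hee, he]
      _ ≤ ‖(f.δ * (f.δ⁻¹ * (f.p.eval (w.1 - f.a) - w.2)))‖ + ‖w.2‖ :=
          norm_add_le _ _
      _ = ‖f.δ‖ * ‖(bwd γ (n+1) z).1‖ + t n := by
          rw [norm_mul, hex]
      _ ≤ _ := by
          have := mul_le_mul_of_nonneg_right hbn.2.2.1 (norm_nonneg (bwd γ (n+1) z).1)
          linarith
    have hx1 : ‖(bwd γ (n+1) z).1‖ ≤ t (n+1) := hx (n+1)
    nlinarith [mul_le_mul_of_nonneg_left hx1 hΔ0.le]
  have h4 : ∀ n, t (n+1) ≤ t n / 2 := by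
    intro n
    have h3n := h3 n
    have hmtn := hmt (n+1)
    nlinarith [mul_le_mul_of_nonneg_right hmtn (ht0 (n+1)), ht0 n, ht0 (n+1), hΔ0]
  have h5 : ∀ n, t n ≤ (1/2:ℝ)^n * t 0 := by
    intro n
    induction n with
    | zero => norm_num
    | succ k ih =>
      calc t (k+1) ≤ t k / 2 := h4 k
      _ ≤ ((1/2:ℝ)^k * t 0) / 2 := by linarith
      _ = (1/2:ℝ)^(k+1) * t 0 := by ring
  obtain ⟨n, hn⟩ := half_pow_small (t 0)
  have := h1 n
  have := h5 n
  linarith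

/-- orbits eventually enter `W_R⁺ = ℂ² \ closure V_R⁻` (forward) and
`W_R⁻ = ℂ² \ closure V_R⁺` (backward). -/
theorem stmt_3 (Γ : Set HenonMap) (hne : Γ.Nonempty) (hΓ : ParamBounded Γ) :
    ∃ R₀ : ℝ, 1 < R₀ ∧ ∀ R : ℝ, R₀ ≤ R →
      ∀ z : ℂ × ℂ, ∀ γ : ℤ → HenonMap, (∀ j : ℤ, γ j ∈ Γ) →
        ∃ n₀ : ℕ, ∀ n : ℕ, n₀ ≤ n →
          fwd γ n z ∈ (closure (VMinus R))ᶜ ∧ bwd γ n z ∈ (closure (VPlus R))ᶜ := by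
  obtain ⟨D, A, d₀, Δ, m, M, hD2, hA0, hd0, hd0Δ, hm0, hmM, hball⟩ := hΓ
  refine ⟨2 + 3*A + (2*D*M + 8*Δ + 12)/m, ?_, ?_⟩
  · have hM0 : (0:ℝ) < M := lt_of_lt_of_le hm0 hmM
    have hΔ0 : (0:ℝ) < Δ := lt_of_lt_of_le hd0 hd0Δ
    have : (0:ℝ) ≤ (2*(D:ℝ)*M + 8*Δ + 12)/m := by positivity
    linarith
  intro R hR z γ hγ
  have hb : ∀ j : ℤ, (γ j).p.natDegree ≤ D ∧ ‖((γ j).a)‖ ≤ A ∧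
      ‖((γ j).δ)‖ ≤ Δ ∧ (∀ i, ‖((γ j).p.coeff i)‖ ≤ M) ∧
      m ≤ ‖((γ j).p.leadingCoeff)‖ := by
    intro j
    obtain ⟨h1, h2, h3, h4, h5, h6⟩ := hball (γ j) (hγ j)
    exact ⟨h1, h2, h4, h5, h6⟩
  obtain ⟨k₁, hk₁⟩ := fwd_escape D A Δ m M R γ hb hm0 hA0 hR z
  obtain ⟨k₂, hk₂⟩ := bwd_escape D A Δ m M R γ hb hm0 hA0 hR z
  have hfwd : ∀ n, k₁ ≤ n →
      ‖(fwd γ n z).1‖ < max R (‖(fwd γ n z).2‖) := by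
    intro n hn
    induction n, hn using Nat.le_induction with
    | base => exact hk₁
    | succ n hn ih =>
      have hbn := hb (n:ℤ)
      exact fwd_inv D A Δ m M R (γ (n:ℤ)) hbn.1 hbn.2.1 hbn.2.2.1 hbn.2.2.2.1
        hbn.2.2.2.2 hm0 hA0 hR (fwd γ n z) ih
  have hbwd : ∀ n, k₂ ≤ n →
      ‖(bwd γ n z).2‖ < max R (‖(bwd γ n z).1‖) := by
    intro n hn
    induction n, hn using Nat.le_induction with
    | base => exact hk₂
    | succ n hn ih =>
      have hbn := hb (-((n:ℤ)+1))
      exact bwd_inv D A Δ m M R (γ (-((n:ℤ)+1))) hbn.1 hbn.2.1 hbn.2.2.1 hbn.2.2.2.1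
        hbn.2.2.2.2 hm0 hA0 hR (bwd γ n z) ih
  refine ⟨max k₁ k₂, fun n hn => ⟨?_, ?_⟩⟩
  · intro hmem
    have hsub : closure (VMinus R) ⊆
        {w : ℂ × ℂ | max R (‖w.2‖) ≤ ‖w.1‖} := by
      apply closure_minimal
      · intro w hw
        exact le_of_lt (show max R (‖w.2‖) < ‖w.1‖ from hw)
      · exact isClosed_le
          (continuous_const.max (continuous_norm.comp continuous_snd))
          (continuous_norm.comp continuous_fst)
    exact absurd (hsub hmem) (not_le.mpr (hfwd n (le_trans (le_max_left _ _) hn)))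
  · intro hmem
    have hsub : closure (VPlus R) ⊆
        {w : ℂ × ℂ | max R (‖w.1‖) ≤ ‖w.2‖} := by
      apply closure_minimal
      · intro w hw
        exact le_of_lt (show max R (‖w.1‖) < ‖w.2‖ from hw)
      · exact isClosed_le
          (continuous_const.max (continuous_norm.comp continuous_fst))
          (continuous_norm.comp continuous_snd)
    exact absurd (hsub hmem) (not_le.mpr (hbwd n (le_trans (le_max_right _ _) hn)))
end
end

section
/- Let Γ be a nonempty parameter-bounded family of Hénon-form maps. Then there exists R₀ > 1 such that for every R ≥ R₀ and every sequence γ = (γ_j)_{j∈ℤ} with all γ_j ∈ Γ: for every ε > 0 there exists N ∈ ℕ such that for all n ≥ N and all (x,y) in the closure of V_R⁺, writing (x_n, y_n) = γ_{n−1}∘⋯∘γ₀(x,y), one has |y_n| > 1/ε and |x_n| < ε|y_n| (i.e., the forward compositions converge to [0:1:0] ∈ ℙ² uniformly on the closure of V_R⁺); and for every ε > 0 there exists N ∈ ℕ such that for all n ≥ N and all (x,y) in the closure of V_R⁻, writing (x_n', y_n') = γ_n⁻¹∘⋯∘γ₁⁻¹(x,y), one has |x_n'| > 1/ε and |y_n'|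 < ε|x_n'| (convergence to [1:0:0] uniformly on the closure of V_R⁻). -/
open Complex Filter Set Topology MeasureTheory Bornology

noncomputable section

lemma my_one_le_two_pow (k : ℕ) : (1:ℝ) ≤ 2 ^ k := one_le_pow₀ one_le_two

/-- reverse triangle inequality for `Complex.abs`. -/
lemma my_abs_sub_lower (u v : ℂ) : ‖u‖ - ‖v‖ ≤ ‖u - v‖ := by
  have h := norm_add_le (u - v) v
  rw [sub_add_cancel] at h; linarith

/-- Lower bound for a polynomial with bounded coefficients and leading coefficient
bounded below. -/
lemma my_poly_lb (p : Polynomial ℂ) (D : ℕ) (M m : ℝ)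
    (hc : ∀ i : ℕ, ‖p.coeff i‖ ≤ M)
    (hlead : m ≤ ‖p.leadingCoeff‖)
    (hdeg : 2 ≤ p.natDegree) (hD : p.natDegree ≤ D)
    (hm : 0 < m) (hM : 0 ≤ M)
    (y : ℂ) (ht : 1 ≤ ‖y‖) (hMD : M * D ≤ m * ‖y‖) :
    ‖y‖ * (m * ‖y‖ - M * D) ≤ ‖p.eval y‖ := by
  set n := p.natDegree with hn
  set t := ‖y‖ with htdef
  have ht0 : 0 < t := lt_of_lt_of_le one_pos ht
  have heval : p.eval y = (∑ i ∈ Finset.range n, p.coeff i * y ^ i) + p.coeff n * y ^ n := by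
    rw [Polynomial.eval_eq_sum_range, Finset.sum_range_succ]
  have hlow : m * t ^ n ≤ ‖p.coeff n * y ^ n‖ := by
    rw [norm_mul, norm_pow]
    exact mul_le_mul hlead le_rfl (by positivity) (norm_nonneg _)
  have htail : ‖∑ i ∈ Finset.range n, p.coeff i * y ^ i‖ ≤ n * (M * t ^ (n - 1)) := by
    calc ‖∑ i ∈ Finset.range n, p.coeff i * y ^ i‖
        ≤ ∑ i ∈ Finset.range n, ‖p.coeff i * y ^ i‖ := norm_sum_le _ _
      _ ≤ ∑ _i ∈ Finset.range n, M * t ^ (n - 1) := by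
          apply Finset.sum_le_sum
          intro i hi
          have hi' : i < n := Finset.mem_range.mp hi
          rw [norm_mul, norm_pow]
          have h1 : t ^ i ≤ t ^ (n - 1) := by
            apply pow_le_pow_right₀ ht
            omega
          exact mul_le_mul (hc i) h1 (by positivity) hM
      _ = n * (M * t ^ (n - 1)) := by
          rw [Finset.sum_const, Finset.card_range, nsmul_eq_mul]
  have key : m * t ^ n - n * (M * t ^ (n - 1)) ≤ ‖p.eval y‖ := by
    rw [heval]
    have h2 := my_abs_sub_lower (p.coeff n * y ^ n)
      (-(∑ i ∈ Finset.range n, p.coeff i * y ^ i))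
    rw [sub_neg_eq_add, norm_neg] at h2
    rw [add_comm]
    linarith
  have hfac : t * (m * t - M * D) ≤ t ^ (n - 1) * (m * t - M * n) := by
    have h1 : t ≤ t ^ (n - 1) := by
      calc t = t ^ 1 := (pow_one t).symm
        _ ≤ t ^ (n - 1) := pow_le_pow_right₀ ht (by omega)
    have h2 : m * t - M * D ≤ m * t - M * n := by
      have hnD : (n : ℝ) ≤ D := Nat.cast_le.mpr hD
      nlinarith
    exact mul_le_mul h1 h2 (by linarith) (by positivity)
  have hpow : t ^ (n - 1) * (m * t - M * n) = m * t ^ n - n * (M * t ^ (n - 1)) := by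
    have h3 : t ^ n = t ^ (n - 1) * t := by
      rw [← pow_succ]; congr 1; omega
    rw [h3]; ring
  rw [hpow] at hfac
  linarith

/-- generic growth lemma with `N` uniform in the sequences. -/
lemma my_growth (K c R₀ R : ℝ) (hK : 1 ≤ K) (hc : 0 < c) (hR₀ : 1 ≤ R₀) (hR : R₀ ≤ R)
    (ε : ℝ) (hε : 0 < ε) :
    ∃ N : ℕ, ∀ a b : ℕ → ℝ, R ≤ a 0 → b 0 ≤ a 0 →
      (∀ n, R₀ ≤ a n → b n ≤ a n →
        b (n + 1) ≤ K * a n ∧ (2 * K + c * (a n - R₀)) * a n ≤ a (n + 1)) →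
      ∀ n, N ≤ n → 1 / ε < a n ∧ b n < ε * a n := by
  have hR0 : 0 < R := lt_of_lt_of_le (lt_of_lt_of_le one_pos hR₀) hR
  obtain ⟨N₀, hN₀⟩ := pow_unbounded_of_one_lt
    (max (1 / (ε * R)) (K / (ε * c) + 1)) (one_lt_two (α := ℝ))
  refine ⟨N₀ + 1, ?_⟩
  intro a b h0a h0b hstep
  have haR₀ : ∀ k, 2 ^ k * R ≤ a k → R₀ ≤ a k := by
    intro k h
    have := my_one_le_two_pow k
    nlinarith
  have inv : ∀ n, 2 ^ n * R ≤ a n ∧ b n ≤ a n := by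
    intro n
    induction n with
    | zero => simpa using ⟨h0a, h0b⟩
    | succ k ih =>
      obtain ⟨ih1, ih2⟩ := ih
      have hak : R₀ ≤ a k := haR₀ k ih1
      have hak0 : 0 < a k := lt_of_lt_of_le (lt_of_lt_of_le one_pos hR₀) hak
      obtain ⟨hs1, hs2⟩ := hstep k hak ih2
      have hA : 2 * K ≤ 2 * K + c * (a k - R₀) := by nlinarith
      have hgrow : 2 * K * a k ≤ a (k + 1) :=
        le_trans (mul_le_mul_of_nonneg_right hA hak0.le) hs2
      constructor
      · calc (2:ℝ) ^ (k+1) * R = 2 * (2 ^ k * R) := by ring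
          _ ≤ 2 * a k := by linarith
          _ ≤ 2 * K * a k := by nlinarith
          _ ≤ a (k + 1) := hgrow
      · calc b (k + 1) ≤ K * a k := hs1
          _ ≤ 2 * K * a k := by nlinarith
          _ ≤ a (k + 1) := hgrow
  intro n hn
  obtain ⟨k, rfl⟩ : ∃ k, n = k + 1 := ⟨n - 1, by omega⟩
  have hkN : N₀ ≤ k := by omega
  have hpk : max (1 / (ε * R)) (K / (ε * c) + 1) < 2 ^ k :=
    lt_of_lt_of_le hN₀ (pow_le_pow_right₀ one_le_two hkN)
  have hpk1 : 1 / (ε * R) < 2 ^ k := lt_of_le_of_lt (le_max_left _ _) hpk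
  have hpk2 : K / (ε * c) + 1 < 2 ^ k := lt_of_le_of_lt (le_max_right _ _) hpk
  obtain ⟨ik1, ik2⟩ := inv k
  obtain ⟨in1, _⟩ := inv (k + 1)
  have hak : R₀ ≤ a k := haR₀ k ik1
  have hak0 : 0 < a k := lt_of_lt_of_le (lt_of_lt_of_le one_pos hR₀) hak
  obtain ⟨hs1, hs2⟩ := hstep k hak ik2
  constructor
  · have h1' : 1 < 2 ^ k * (ε * R) := (div_lt_iff₀ (by positivity)).mp hpk1
    rw [div_lt_iff₀ hε]
    have h2 : (2:ℝ) ^ k * R ≤ 2 ^ (k + 1) * R := by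
      have h3 : (2:ℝ) ^ k ≤ 2 ^ (k+1) := pow_le_pow_right₀ one_le_two (by omega)
      nlinarith
    nlinarith
  · have hfac : K < ε * (2 * K + c * (a k - R₀)) := by
      have h1 : (2:ℝ) ^ k - 1 ≤ a k - R₀ := by
        have h0 : (2:ℝ) ^ k * R₀ ≤ 2 ^ k * R := by
          nlinarith [pow_pos (zero_lt_two (α := ℝ)) k]
        nlinarith [pow_pos (zero_lt_two (α := ℝ)) k]
      have h2 : K / (ε * c) < 2 ^ k - 1 := by linarith
      have h3 : K < ε * c * (2 ^ k - 1) := by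
        rw [div_lt_iff₀ (by positivity : (0:ℝ) < ε * c)] at h2
        linarith
      have h4 : ε * c * (2 ^ k - 1) ≤ ε * c * (a k - R₀) :=
        mul_le_mul_of_nonneg_left h1 (by positivity)
      have h5 : (0:ℝ) ≤ ε * (2 * K) := by positivity
      have h6 : ε * (2 * K + c * (a k - R₀)) = ε * (2 * K) + ε * c * (a k - R₀) := by ring
      linarith
    calc b (k + 1) ≤ K * a k := hs1
      _ < ε * (2 * K + c * (a k - R₀)) * a k := mul_lt_mul_of_pos_right hfac hak0
      _ = ε * ((2 * K + c * (a k - R₀)) * a k) := by ring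
      _ ≤ ε * a (k + 1) := mul_le_mul_of_nonneg_left hs2 hε.le

lemma my_abs_sub_upper (u v : ℂ) : ‖u - v‖ ≤ ‖u‖ + ‖v‖ := by
  have h := norm_add_le u (-v)
  rw [← sub_eq_add_neg, norm_neg] at h; linarith

lemma my_closure_plus (R : ℝ) (z : ℂ × ℂ) (hz : z ∈ closure (VPlus R)) :
    R ≤ ‖z.2‖ ∧ ‖z.1‖ ≤ ‖z.2‖ := by
  have hsub : closure (VPlus R) ⊆
      {w : ℂ × ℂ | R ≤ ‖w.2‖ ∧ ‖w.1‖ ≤ ‖w.2‖} := by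
    apply closure_minimal
    · intro w hw
      exact ⟨(le_max_left _ _).trans hw.le, (le_max_right _ _).trans hw.le⟩
    · exact IsClosed.inter
        (isClosed_le continuous_const (continuous_norm.comp continuous_snd))
        (isClosed_le (continuous_norm.comp continuous_fst)
          (continuous_norm.comp continuous_snd))
  exact hsub hz

lemma my_closure_minus (R : ℝ) (z : ℂ × ℂ) (hz : z ∈ closure (VMinus R)) :
    R ≤ ‖z.1‖ ∧ ‖z.2‖ ≤ ‖z.1‖ := by
  have hsub : closure (VMinus R) ⊆
      {w : ℂ × ℂ | R ≤ ‖w.1‖ ∧ ‖w.2‖ ≤ ‖w.1‖} := by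
    apply closure_minimal
    · intro w hw
      exact ⟨(le_max_left _ _).trans hw.le, (le_max_right _ _).trans hw.le⟩
    · exact IsClosed.inter
        (isClosed_le continuous_const (continuous_norm.comp continuous_fst))
        (isClosed_le (continuous_norm.comp continuous_snd)
          (continuous_norm.comp continuous_fst))
  exact hsub hz

lemma my_fwd_step (D : ℕ) (A Δ m M K R₀ : ℝ) (hA : 0 ≤ A) (hm : 0 < m) (hM : 0 ≤ M)
    (hΔ : 0 < Δ) (hKdef : K = 1 + A)
    (hP1 : 2 ≤ R₀) (hP3 : 2 * M * D ≤ m * R₀) (hP4 : M * D + Δ + 2 * K ≤ m * R₀)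
    (f : HenonMap) (hfD : f.p.natDegree ≤ D) (hfa : ‖f.a‖ ≤ A)
    (hfδ : ‖f.δ‖ ≤ Δ)
    (hcoeff : ∀ i, ‖f.p.coeff i‖ ≤ M)
    (hlead : m ≤ ‖f.p.leadingCoeff‖)
    (z : ℂ × ℂ) (hz1 : R₀ ≤ ‖z.2‖) (hz2 : ‖z.1‖ ≤ ‖z.2‖) :
    ‖(f.toFun z).1‖ ≤ K * ‖z.2‖ ∧
    (2 * K + m * (‖z.2‖ - R₀)) * ‖z.2‖ ≤ ‖(f.toFun z).2‖ := by
  set t := ‖z.2‖ with htdef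
  have ht2 : 2 ≤ t := le_trans hP1 hz1
  have ht1 : 1 ≤ t := by linarith
  have ht0 : 0 < t := by linarith
  have hMD0 : 0 ≤ M * D := mul_nonneg hM (Nat.cast_nonneg D)
  constructor
  · -- first coordinate
    show ‖z.2 + f.a‖ ≤ K * t
    calc ‖z.2 + f.a‖ ≤ t + ‖f.a‖ := norm_add_le _ _
      _ ≤ t + A := by linarith
      _ ≤ K * t := by rw [hKdef]; nlinarith
  · -- second coordinate
    show (2 * K + m * (t - R₀)) * t ≤ ‖f.p.eval z.2 - f.δ * z.1‖
    have hmt : m * R₀ ≤ m * t := mul_le_mul_of_nonneg_left hz1 hm.le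
    have hMDt : M * D ≤ m * t := by linarith
    have hpoly : t * (m * t - M * D) ≤ ‖f.p.eval z.2‖ :=
      my_poly_lb f.p D M m hcoeff hlead f.hdeg hfD hm hM z.2 ht1 hMDt
    have hδx : ‖f.δ * z.1‖ ≤ Δ * t := by
      rw [norm_mul]
      exact mul_le_mul hfδ hz2 (norm_nonneg _) hΔ.le
    have hlow := my_abs_sub_lower (f.p.eval z.2) (f.δ * z.1)
    have h8 : 2 * K + m * (t - R₀) ≤ m * t - M * D - Δ := by linarith
    have h9 := mul_le_mul_of_nonneg_right h8 ht0.le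
    have h10 : (m * t - M * D - Δ) * t = t * (m * t - M * D) - Δ * t := by ring
    linarith

lemma my_bwd_step (D : ℕ) (A Δ m M K R₀ : ℝ) (hA : 0 ≤ A) (hm : 0 < m) (hM : 0 ≤ M)
    (hΔ : 0 < Δ) (hKdef : K = 1 + A) (hK1 : 1 ≤ K)
    (hP1 : 2 ≤ R₀) (hP2 : 2 * A ≤ R₀) (hP3 : 2 * M * D ≤ m * R₀)
    (hP5 : 8 * K * Δ + 2 * M * D + 4 ≤ m * R₀)
    (f : HenonMap) (hfD : f.p.natDegree ≤ D) (hfa : ‖f.a‖ ≤ A)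
    (hfδ : ‖f.δ‖ ≤ Δ)
    (hcoeff : ∀ i, ‖f.p.coeff i‖ ≤ M)
    (hlead : m ≤ ‖f.p.leadingCoeff‖)
    (z : ℂ × ℂ) (hz1 : R₀ ≤ ‖z.1‖) (hz2 : ‖z.2‖ ≤ ‖z.1‖) :
    ‖(f.invFun z).2‖ ≤ K * ‖z.1‖ ∧
    (2 * K + (m / (4 * Δ)) * (‖z.1‖ - R₀)) * ‖z.1‖ ≤
      ‖(f.invFun z).1‖ := by
  set s := ‖z.1‖ with hsdef
  have hs2 : 2 ≤ s := le_trans hP1 hz1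
  have hs0 : 0 < s := by linarith
  have hMD0 : 0 ≤ M * D := mul_nonneg hM (Nat.cast_nonneg D)
  have hKΔ : 0 ≤ K * Δ := mul_nonneg (by linarith) hΔ.le
  set w := z.1 - f.a with hwdef
  set t := ‖w‖ with htdef
  have htlow : s - A ≤ t := by
    have := my_abs_sub_lower z.1 f.a; simp only [← hsdef, ← htdef, ← hwdef] at this; linarith
  have hts2 : s / 2 ≤ t := by nlinarith
  have ht1 : 1 ≤ t := by linarith
  have hthigh : t ≤ s + A := by
    have := my_abs_sub_upper z.1 f.a; simp only [← hsdef, ← htdef, ← hwdef] at this; linarith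
  constructor
  · show ‖z.1 - f.a‖ ≤ K * s
    calc ‖z.1 - f.a‖ = t := rfl
      _ ≤ s + A := hthigh
      _ ≤ K * s := by rw [hKdef]; nlinarith
  · show (2 * K + (m / (4 * Δ)) * (s - R₀)) * s ≤
      ‖f.δ⁻¹ * (f.p.eval w - z.2)‖
    have hms : m * R₀ ≤ m * s := mul_le_mul_of_nonneg_left hz1 hm.le
    have hmt2 : m * (s / 2) ≤ m * t := mul_le_mul_of_nonneg_left hts2 hm.le
    have hMDt : M * D ≤ m * t := by linarith
    have hpoly : t * (m * t - M * D) ≤ ‖f.p.eval w‖ :=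
      my_poly_lb f.p D M m hcoeff hlead f.hdeg hfD hm hM w ht1 hMDt
    have hmono : (s / 2) * (m * (s / 2) - M * D) ≤ t * (m * t - M * D) := by
      apply mul_le_mul hts2 (by linarith) (by linarith) (by linarith)
    have hlow := my_abs_sub_lower (f.p.eval w) z.2
    have e : (s / 2) * (m * (s / 2) - M * D) - s = s * (m * s / 4 - M * D / 2 - 1) := by
      ring
    have hX : s * (m * s / 4 - M * D / 2 - 1) ≤ ‖f.p.eval w - z.2‖ := by
      linarith
    have hXpos : 0 ≤ s * (m * s / 4 - M * D / 2 - 1) := by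
      have h7 : 0 ≤ m * s / 4 - M * D / 2 - 1 := by linarith
      exact mul_nonneg hs0.le h7
    have hδ0 : 0 < ‖f.δ‖ := norm_pos_iff.mpr f.hδ
    have hinv : Δ⁻¹ ≤ (‖f.δ‖)⁻¹ := inv_anti₀ hδ0 hfδ
    have habs : ‖f.δ⁻¹ * (f.p.eval w - z.2)‖ =
        (‖f.δ‖)⁻¹ * ‖f.p.eval w - z.2‖ := by
      rw [norm_mul, norm_inv]
    have hbig : Δ⁻¹ * (s * (m * s / 4 - M * D / 2 - 1)) ≤
        (‖f.δ‖)⁻¹ * ‖f.p.eval w - z.2‖ :=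
      mul_le_mul hinv hX hXpos (by positivity)
    have hkey : 2 * K + (m / (4 * Δ)) * (s - R₀) ≤ Δ⁻¹ * (m * s / 4 - M * D / 2 - 1) := by
      have e1 : Δ * (Δ⁻¹ * (m * s / 4 - M * D / 2 - 1)) = m * s / 4 - M * D / 2 - 1 := by
        rw [← mul_assoc, mul_inv_cancel₀ hΔ.ne', one_mul]
      have e2 : Δ * (2 * K + (m / (4 * Δ)) * (s - R₀)) =
          2 * K * Δ + (m / 4) * (s - R₀) := by
        have h4Δ : (4:ℝ) * Δ ≠ 0 := by positivity
        field_simp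
      have e3 : (m / 4) * (s - R₀) = (m * s) / 4 - (m * R₀) / 4 := by ring
      have h11 : Δ * (2 * K + (m / (4 * Δ)) * (s - R₀)) ≤
          Δ * (Δ⁻¹ * (m * s / 4 - M * D / 2 - 1)) := by
        rw [e1, e2]
        linarith
      exact le_of_mul_le_mul_left h11 hΔ
    calc (2 * K + (m / (4 * Δ)) * (s - R₀)) * s
        ≤ (Δ⁻¹ * (m * s / 4 - M * D / 2 - 1)) * s :=
          mul_le_mul_of_nonneg_right hkey hs0.le
      _ = Δ⁻¹ * (s * (m * s / 4 - M * D / 2 - 1)) := by ring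
      _ ≤ (‖f.δ‖)⁻¹ * ‖f.p.eval w - z.2‖ := hbig
      _ = ‖f.δ⁻¹ * (f.p.eval w - z.2)‖ := habs.symm

/-- uniform convergence of forward compositions to `[0:1:0]` on the closure
of `V_R⁺`, and of backward compositions to `[1:0:0]` on the closure of `V_R⁻`. -/
theorem stmt_4 (Γ : Set HenonMap) (hne : Γ.Nonempty) (hΓ : ParamBounded Γ) :
    ∃ R₀ : ℝ, 1 < R₀ ∧ ∀ R : ℝ, R₀ ≤ R →
      ∀ γ : ℤ → HenonMap, (∀ j : ℤ, γ j ∈ Γ) →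
        (∀ ε : ℝ, 0 < ε → ∃ N : ℕ, ∀ n : ℕ, N ≤ n → ∀ z ∈ closure (VPlus R),
          1 / ε < ‖(fwd γ n z).2‖ ∧
          ‖(fwd γ n z).1‖ < ε * ‖(fwd γ n z).2‖) ∧
        (∀ ε : ℝ, 0 < ε → ∃ N : ℕ, ∀ n : ℕ, N ≤ n → ∀ z ∈ closure (VMinus R),
          1 / ε < ‖(bwd γ n z).1‖ ∧
          ‖(bwd γ n z).2‖ < ε * ‖(bwd γ n z).1‖) := by
  obtain ⟨D, A, d₀, Δ, m, M, hD2, hA, hd₀, hd₀Δ, hm, hmM, hmem⟩ := hΓ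
  have hΔ : 0 < Δ := lt_of_lt_of_le hd₀ hd₀Δ
  have hM : 0 ≤ M := (lt_of_lt_of_le hm hmM).le
  set K : ℝ := 1 + A with hKdef
  have hK1 : 1 ≤ K := by rw [hKdef]; linarith
  have hMD0 : 0 ≤ M * D := mul_nonneg hM (Nat.cast_nonneg D)
  have hKΔ0 : 0 ≤ K * Δ := mul_nonneg (by linarith) hΔ.le
  set R₀ : ℝ := 2 + 2 * A + (2 * M * D + Δ + 2 * K + 8 * K * Δ + 4) / m with hR₀def
  have hnum : 0 ≤ 2 * M * D + Δ + 2 * K + 8 * K * Δ + 4 := by linarith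
  have hdiv : 0 ≤ (2 * M * D + Δ + 2 * K + 8 * K * Δ + 4) / m := div_nonneg hnum hm.le
  have hP1 : 2 ≤ R₀ := by rw [hR₀def]; linarith
  have hP2 : 2 * A ≤ R₀ := by rw [hR₀def]; linarith
  have hmR₀ : 2 * M * D + Δ + 2 * K + 8 * K * Δ + 4 ≤ m * R₀ := by
    have e : m * ((2 * M * D + Δ + 2 * K + 8 * K * Δ + 4) / m)
        = 2 * M * D + Δ + 2 * K + 8 * K * Δ + 4 := mul_div_cancel₀ _ hm.ne'
    have e2 : m * R₀ = m * (2 + 2 * A) + (2 * M * D + Δ + 2 * K + 8 * K * Δ + 4) := by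
      rw [hR₀def, mul_add, e]
    have hpos : 0 ≤ m * (2 + 2 * A) := mul_nonneg hm.le (by linarith)
    linarith
  have hP3 : 2 * M * D ≤ m * R₀ := by linarith
  have hP4 : M * D + Δ + 2 * K ≤ m * R₀ := by linarith
  have hP5 : 8 * K * Δ + 2 * M * D + 4 ≤ m * R₀ := by linarith
  have hR₀1 : 1 ≤ R₀ := by linarith
  refine ⟨R₀, by linarith, ?_⟩
  intro R hR γ hγ
  constructor
  · intro ε hε
    obtain ⟨N, hN⟩ := my_growth K m R₀ R hK1 hm hR₀1 hR ε hε
    refine ⟨N, ?_⟩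
    intro n hn z hz
    obtain ⟨hz1, hz2⟩ := my_closure_plus R z hz
    refine hN (fun k => ‖(fwd γ k z).2‖)
      (fun k => ‖(fwd γ k z).1‖) ?_ ?_ ?_ n hn
    · simpa [fwd] using hz1
    · simpa [fwd] using hz2
    · intro k hk1 hk2
      obtain ⟨hfD, hfa, _, hfδ, hco, hle⟩ := hmem (γ (k : ℤ)) (hγ k)
      exact my_fwd_step D A Δ m M K R₀ hA hm hM hΔ hKdef hP1 hP3 hP4
        (γ (k : ℤ)) hfD hfa hfδ hco hle (fwd γ k z) hk1 hk2
  · intro ε hε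
    have hc : 0 < m / (4 * Δ) := by positivity
    obtain ⟨N, hN⟩ := my_growth K (m / (4 * Δ)) R₀ R hK1 hc hR₀1 hR ε hε
    refine ⟨N, ?_⟩
    intro n hn z hz
    obtain ⟨hz1, hz2⟩ := my_closure_minus R z hz
    refine hN (fun k => ‖(bwd γ k z).1‖)
      (fun k => ‖(bwd γ k z).2‖) ?_ ?_ ?_ n hn
    · simpa [bwd] using hz1
    · simpa [bwd] using hz2
    · intro k hk1 hk2
      obtain ⟨hfD, hfa, _, hfδ, hco, hle⟩ := hmem (γ (-((k : ℤ) + 1))) (hγ _)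
      exact my_bwd_step D A Δ m M K R₀ hA hm hM hΔ hKdef hK1 hP1 hP2 hP3 hP5
        (γ (-((k : ℤ) + 1))) hfD hfa hfδ hco hle (bwd γ k z) hk1 hk2
end
end

section
/- Let Γ be a nonempty parameter-bounded family of Hénon-form maps and let γ = (γ_j)_{j∈ℤ} be a sequence with all γ_j ∈ Γ. Then I_γ⁺ ∪ K_γ⁺ = ℂ² and I_γ⁺ ∩ K_γ⁺ = ∅, and likewise I_γ⁻ ∪ K_γ⁻ = ℂ² and I_γ⁻ ∩ K_γ⁻ = ∅. In other words, for every z ∈ ℂ² the forward orbit (γ_{n−1}∘⋯∘γ₀(z))_{n≥1} is either bounded or tends to infinity in norm, and similarly for the backward orbit under the inverse maps. -/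
open Complex Filter Set Topology MeasureTheory Bornology

noncomputable section

lemma henon_left_inv (f : HenonMap) (z : ℂ × ℂ) : f.invFun (f.toFun z) = z := by
  have h := f.hδ
  simp only [HenonMap.toFun, HenonMap.invFun, add_sub_cancel_right]
  refine Prod.ext ?_ rfl
  field_simp
  ring

lemma henon_right_inv (f : HenonMap) (z : ℂ × ℂ) : f.toFun (f.invFun z) = z := by
  have h := f.hδ
  simp only [HenonMap.toFun, HenonMap.invFun, sub_add_cancel]
  refine Prod.ext rfl ?_
  field_simp
  ring

lemma poly_lb (p : Polynomial ℂ) (D : ℕ) (m M : ℝ) (h2 : 2 ≤ p.natDegree)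
    (hdD : p.natDegree ≤ D) (hm : m ≤ ‖p.leadingCoeff‖)
    (hM : ∀ i, ‖p.coeff i‖ ≤ M)
    (u : ℂ) (hu : 1 ≤ ‖u‖) (hgap : (D : ℝ) * M ≤ m * ‖u‖) :
    (m * ‖u‖ - (D : ℝ) * M) * ‖u‖ ≤ ‖p.eval u‖ := by
  set d := p.natDegree with hd
  have hd1 : d - 1 + 1 = d := by omega
  have hu0 : (0 : ℝ) ≤ ‖u‖ := norm_nonneg u
  have hM0 : (0 : ℝ) ≤ M := (norm_nonneg _).trans (hM 0)
  have heval : p.eval u = (∑ i ∈ Finset.range d, p.coeff i * u ^ i) + p.coeff d * u ^ d := by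
    rw [Polynomial.eval_eq_sum_range, Finset.sum_range_succ]
  have hsum : ‖∑ i ∈ Finset.range d, p.coeff i * u ^ i‖ ≤ (d : ℝ) * (M * ‖u‖ ^ (d - 1)) := by
    calc ‖∑ i ∈ Finset.range d, p.coeff i * u ^ i‖
        ≤ ∑ i ∈ Finset.range d, ‖p.coeff i * u ^ i‖ := norm_sum_le _ _
      _ ≤ ∑ _i ∈ Finset.range d, M * ‖u‖ ^ (d - 1) := by
          refine Finset.sum_le_sum fun i hi => ?_
          rw [norm_mul, norm_pow]
          have h1 : ‖u‖ ^ i ≤ ‖u‖ ^ (d - 1) :=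
            pow_le_pow_right₀ hu (by have := Finset.mem_range.1 hi; omega)
          exact mul_le_mul (hM i) h1 (pow_nonneg hu0 i) hM0
      _ = (d : ℝ) * (M * ‖u‖ ^ (d - 1)) := by
          rw [Finset.sum_const, Finset.card_range, nsmul_eq_mul]
  have hlead : m * ‖u‖ ^ d ≤ ‖p.coeff d * u ^ d‖ := by
    rw [norm_mul, norm_pow]
    exact mul_le_mul_of_nonneg_right hm (pow_nonneg hu0 d)
  have step1 : m * ‖u‖ ^ d - (d : ℝ) * (M * ‖u‖ ^ (d - 1)) ≤ ‖p.eval u‖ := by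
    have h := norm_sub_norm_le (p.coeff d * u ^ d) (-(∑ i ∈ Finset.range d, p.coeff i * u ^ i))
    rw [norm_neg, sub_neg_eq_add, add_comm] at h
    rw [heval]
    linarith
  have hpow : ‖u‖ ≤ ‖u‖ ^ (d - 1) := by
    calc ‖u‖ = ‖u‖ ^ 1 := (pow_one _).symm
      _ ≤ ‖u‖ ^ (d - 1) := pow_le_pow_right₀ hu (by omega)
  have h5 : m * ‖u‖ - (D : ℝ) * M ≤ m * ‖u‖ - (d : ℝ) * M := by
    have : (d : ℝ) * M ≤ (D : ℝ) * M :=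
      mul_le_mul_of_nonneg_right (Nat.cast_le.2 hdD) hM0
    linarith
  have hx : (0 : ℝ) ≤ m * ‖u‖ - (D : ℝ) * M := by linarith
  have hfin : (m * ‖u‖ - (D : ℝ) * M) * ‖u‖ ≤ (m * ‖u‖ - (d : ℝ) * M) * ‖u‖ ^ (d - 1) :=
    mul_le_mul h5 hpow hu0 (hx.trans h5)
  have hpowd : ‖u‖ ^ d = ‖u‖ ^ (d - 1) * ‖u‖ := by rw [← pow_succ, hd1]
  have heq : (m * ‖u‖ - (d : ℝ) * M) * ‖u‖ ^ (d - 1) = m * ‖u‖ ^ d - (d : ℝ) * (M * ‖u‖ ^ (d - 1)) := by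
    rw [hpowd]; ring
  linarith

lemma keyP (A Δ m M : ℝ) (D : ℕ) (hA : 0 ≤ A) (hΔ : 0 < Δ) (hm : 0 < m)
    (f : HenonMap) (hdD : f.p.natDegree ≤ D) (hfa : ‖f.a‖ ≤ A)
    (hfδ : ‖f.δ‖ ≤ Δ) (hcoeff : ∀ i, ‖f.p.coeff i‖ ≤ M)
    (hlead : m ≤ ‖f.p.leadingCoeff‖)
    (R : ℝ) (hR1 : 2 * A + 2 ≤ R)
    (hR2 : 4 * Δ * (A + 2) + 3 * (D : ℝ) * M + Δ + A + 6 ≤ m * R) :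
    (∀ z : ℂ × ℂ, R < ‖z.2‖ → ‖z.1‖ ≤ ‖z.2‖ →
       (R < ‖(f.toFun z).2‖ ∧ ‖(f.toFun z).1‖ ≤ ‖(f.toFun z).2‖) ∧
       2 * ‖z.2‖ ≤ ‖(f.toFun z).2‖) ∧
    (∀ z : ℂ × ℂ, R < ‖z.1‖ → ‖z.2‖ ≤ ‖z.1‖ →
       (R < ‖(f.invFun z).1‖ ∧ ‖(f.invFun z).2‖ ≤ ‖(f.invFun z).1‖) ∧
       2 * ‖z.1‖ ≤ ‖(f.invFun z).1‖) := by
  have hM0 : (0 : ℝ) ≤ M := (norm_nonneg _).trans (hcoeff 0)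
  have hD0 : (0 : ℝ) ≤ (D : ℝ) := Nat.cast_nonneg D
  have hDM0 : (0 : ℝ) ≤ (D : ℝ) * M := mul_nonneg hD0 hM0
  have hR0 : (2 : ℝ) ≤ R := by linarith
  have hΔA2 : (0:ℝ) ≤ Δ * (A + 2) := mul_nonneg hΔ.le (by linarith)
  constructor
  · intro z hy hxy
    set ay := ‖z.2‖ with hay
    have hay0 : (0 : ℝ) ≤ ay := norm_nonneg _
    have hay1 : (1 : ℝ) ≤ ay := by linarith
    have hmy : m * R ≤ m * ay := mul_le_mul_of_nonneg_left (by linarith : R ≤ ay) hm.le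
    have hgap : (D : ℝ) * M ≤ m * ay := by linarith
    have hp : (m * ay - (D : ℝ) * M) * ay ≤ ‖f.p.eval z.2‖ :=
      poly_lb f.p D m M f.hdeg hdD hlead hcoeff z.2 hay1 hgap
    have hδx : ‖f.δ * z.1‖ ≤ Δ * ay := by
      rw [norm_mul]
      exact mul_le_mul hfδ hxy (norm_nonneg _) hΔ.le
    have hy' : (m * ay - (D : ℝ) * M - Δ) * ay ≤ ‖(f.toFun z).2‖ := by
      have h := norm_sub_norm_le (f.p.eval z.2) (f.δ * z.1)
      have : ‖(f.toFun z).2‖ = ‖f.p.eval z.2 - f.δ * z.1‖ := rfl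
      rw [this]
      nlinarith [hp, hδx, h]
    have hbig : A + 2 ≤ m * ay - (D : ℝ) * M - Δ := by linarith
    have hy'2 : (A + 2) * ay ≤ ‖(f.toFun z).2‖ :=
      le_trans (mul_le_mul_of_nonneg_right hbig hay0) hy'
    have hx' : ‖(f.toFun z).1‖ ≤ (A + 1) * ay := by
      have : ‖(f.toFun z).1‖ = ‖z.2 + f.a‖ := rfl
      rw [this]
      calc ‖z.2 + f.a‖ ≤ ay + ‖f.a‖ := norm_add_le _ _
        _ ≤ ay + A := by linarith
        _ ≤ (A + 1) * ay := by
            have := mul_le_mul_of_nonneg_left hay1 hA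
            linarith
    refine ⟨⟨?_, ?_⟩, ?_⟩
    · linarith [mul_nonneg hA hay0, hy'2]
    · linarith [hay0, hx', hy'2]
    · linarith [mul_nonneg hA hay0, hy'2]
  · intro z hx hyx
    set ax := ‖z.1‖ with hax
    have hax0 : (0 : ℝ) ≤ ax := norm_nonneg _
    have hax2 : (2 : ℝ) ≤ ax := by linarith
    have hmx : m * R ≤ m * ax := mul_le_mul_of_nonneg_left (by linarith : R ≤ ax) hm.le
    set u := z.1 - f.a with hu
    have hau_lb : ax - A ≤ ‖u‖ := by
      have h := norm_sub_norm_le z.1 f.a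
      linarith
    have hau_half : ax / 2 ≤ ‖u‖ := by linarith
    have hau_ub : ‖u‖ ≤ ax + A := by
      have h := norm_sub_le z.1 f.a
      linarith
    have hau1 : (1 : ℝ) ≤ ‖u‖ := by linarith
    have hmu : m * (ax / 2) ≤ m * ‖u‖ := mul_le_mul_of_nonneg_left hau_half hm.le
    have hgap : (D : ℝ) * M ≤ m * ‖u‖ := by linarith
    have hp : (m * ‖u‖ - (D : ℝ) * M) * ‖u‖ ≤ ‖f.p.eval u‖ :=
      poly_lb f.p D m M f.hdeg hdD hlead hcoeff u hau1 hgap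
    -- (m au - DM) * au ≥ (Δ*(A+2)+1) * ax
    have hprod : (Δ * (A + 2) + 1) * ax ≤ (m * ‖u‖ - (D : ℝ) * M) * ‖u‖ := by
      have h1 : 2 * Δ * (A + 2) + 2 ≤ m * ‖u‖ - (D : ℝ) * M := by linarith
      have h2 : (2 * Δ * (A + 2) + 2) * (ax / 2) ≤ (m * ‖u‖ - (D : ℝ) * M) * ‖u‖ :=
        mul_le_mul h1 hau_half (by linarith) (by linarith)
      linarith
    have hpy : Δ * (A + 2) * ax ≤ ‖f.p.eval u - z.2‖ := by
      have h := norm_sub_norm_le (f.p.eval u) z.2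
      linarith [hp, hprod]
    have hδx'' : ‖f.δ‖ * ‖(f.invFun z).1‖ = ‖f.p.eval u - z.2‖ := by
      have : f.δ * (f.invFun z).1 = f.p.eval u - z.2 := by
        show f.δ * (f.δ⁻¹ * (f.p.eval (z.1 - f.a) - z.2)) = _
        rw [← mul_assoc, mul_inv_cancel₀ f.hδ, one_mul, ← hu]
      rw [← this, norm_mul]
    have hx'' : (A + 2) * ax ≤ ‖(f.invFun z).1‖ := by
      have hδa : ‖f.δ‖ ≤ Δ := hfδ
      have h1 : Δ * ((A + 2) * ax) ≤ ‖f.δ‖ * ‖(f.invFun z).1‖ := by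
        rw [hδx'']; linarith [hpy, mul_assoc Δ (A + 2) ax ▸ hpy]
      have h2 : ‖f.δ‖ * ‖(f.invFun z).1‖ ≤ Δ * ‖(f.invFun z).1‖ :=
        mul_le_mul_of_nonneg_right hδa (norm_nonneg _)
      exact le_of_mul_le_mul_left (h1.trans h2) hΔ
    have hy'' : ‖(f.invFun z).2‖ ≤ (A + 1) * ax := by
      have : ‖(f.invFun z).2‖ = ‖u‖ := rfl
      rw [this]
      have := mul_le_mul_of_nonneg_left hax2 hA
      linarith
    refine ⟨⟨?_, ?_⟩, ?_⟩
    · linarith [mul_nonneg hA hax0, hx'']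
    · linarith [hax0, hy'', hx'']
    · linarith [mul_nonneg hA hax0, hx'']

lemma dichotomy_aux (R : ℝ) (hR : 0 < R)
    (orb : ℕ → (ℂ × ℂ) → ℂ × ℂ) (e c : ℂ × ℂ → ℝ)
    (hnorm : ∀ w, ‖w‖ = max (c w) (e w))
    (horb0 : ∀ z, orb 0 z = z)
    (hU : ∀ n z, R < e (orb n z) → c (orb n z) ≤ e (orb n z) →
        (R < e (orb (n+1) z) ∧ c (orb (n+1) z) ≤ e (orb (n+1) z)) ∧
        2 * e (orb n z) ≤ e (orb (n+1) z))
    (hL : ∀ n z, R < c (orb (n+1) z) → e (orb (n+1) z) ≤ c (orb (n+1) z) →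
        (R < c (orb n z) ∧ e (orb n z) ≤ c (orb n z)) ∧
        2 * c (orb (n+1) z) ≤ c (orb n z))
    (z : ℂ × ℂ) :
    (Tendsto (fun n => ‖orb n z‖) atTop atTop ∨ IsBounded (Set.range fun n => orb n z)) ∧
    ¬(Tendsto (fun n => ‖orb n z‖) atTop atTop ∧ IsBounded (Set.range fun n => orb n z)) := by
  constructor
  · by_cases hcase : ∃ N, R < e (orb N z) ∧ c (orb N z) ≤ e (orb N z)
    · left
      obtain ⟨N, hN⟩ := hcase
      have key : ∀ k, (R < e (orb (N + k) z) ∧ c (orb (N + k) z) ≤ e (orb (N + k) z)) ∧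
          2 ^ k * R ≤ e (orb (N + k) z) := by
        intro k
        induction k with
        | zero => exact ⟨hN, by simpa using hN.1.le⟩
        | succ k ih =>
          obtain ⟨⟨h1, h2⟩, h3⟩ := ih
          have h := hU (N + k) z h1 h2
          refine ⟨h.1, ?_⟩
          calc (2 : ℝ) ^ (k + 1) * R = 2 * (2 ^ k * R) := by ring
            _ ≤ 2 * e (orb (N + k) z) := by linarith
            _ ≤ e (orb (N + k + 1) z) := h.2
      rw [tendsto_atTop_atTop]
      intro b
      obtain ⟨k, hk⟩ := pow_unbounded_of_one_lt (b / R) (one_lt_two (α := ℝ))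
      refine ⟨N + k, fun n hn => ?_⟩
      have hnN : N + (n - N) = n := by omega
      have hkn : k ≤ n - N := by omega
      have h1 := (key (n - N)).2
      rw [hnN] at h1
      have h2 : (2 : ℝ) ^ k ≤ 2 ^ (n - N) := pow_le_pow_right₀ one_le_two hkn
      have hb : b ≤ 2 ^ (n - N) * R := by
        rw [div_lt_iff₀ hR] at hk
        nlinarith
      have : e (orb n z) ≤ ‖orb n z‖ := by rw [hnorm]; exact le_max_right _ _
      linarith
    · right
      push_neg at hcase
      have down : ∀ n, R < c (orb n z) → e (orb n z) ≤ c (orb n z) → c (orb n z) ≤ c z := by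
        intro n
        induction n with
        | zero => intro _ _; rw [horb0]
        | succ n ih =>
          intro h1 h2
          obtain ⟨⟨h3, h4⟩, h5⟩ := hL n z h1 h2
          linarith [ih h3 h4]
      rw [isBounded_iff_forall_norm_le]
      refine ⟨max R ‖z‖, ?_⟩
      rintro x ⟨n, rfl⟩
      by_cases hn : R < c (orb n z) ∧ e (orb n z) ≤ c (orb n z)
      · have hc := down n hn.1 hn.2
        have : c z ≤ ‖z‖ := by rw [hnorm]; exact le_max_left _ _
        rw [hnorm]
        rw [max_le_iff]
        constructor
        · exact le_max_of_le_right (by linarith)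
        · exact le_max_of_le_right (by linarith [hn.2])
      · have hnU := hcase n
        rw [hnorm, max_le_iff]
        -- show both c, e ≤ R
        have hcc : e (orb n z) ≤ R ∧ c (orb n z) ≤ R := by
          by_contra hctr
          push_neg at hn hctr
          rcases le_or_gt (e (orb n z)) R with he | he
          · have hc := hctr he
            have := hn hc
            linarith
          · have h1 := hnU he
            have h2 := hn (by linarith)
            linarith
        exact ⟨le_max_of_le_left hcc.2, le_max_of_le_left hcc.1⟩
  · rintro ⟨ht, hb⟩
    rw [isBounded_iff_forall_norm_le] at hb
    obtain ⟨C, hC⟩ := hb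
    obtain ⟨n, hn⟩ := (tendsto_atTop_atTop.1 ht (C + 1) : ∃ N, ∀ n ≥ N, C + 1 ≤ ‖orb n z‖)
    have := hC (orb n z) ⟨n, rfl⟩
    linarith [hn n le_rfl]


/-- `I_γ± ∪ K_γ± = ℂ²` and `I_γ± ∩ K_γ± = ∅`. -/
theorem stmt_5 (Γ : Set HenonMap) (hne : Γ.Nonempty) (hΓ : ParamBounded Γ)
    (γ : ℤ → HenonMap) (hγ : ∀ j : ℤ, γ j ∈ Γ) :
    IPlus γ ∪ KPlus γ = Set.univ ∧ IPlus γ ∩ KPlus γ = ∅ ∧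
    IMinus γ ∪ KMinus γ = Set.univ ∧ IMinus γ ∩ KMinus γ = ∅ := by
  obtain ⟨D, A, d₀, Δ, m, M, hD, hA, hd₀, hd₀Δ, hm, hmM, hbound⟩ := hΓ
  have hΔpos : 0 < Δ := lt_of_lt_of_le hd₀ hd₀Δ
  set R : ℝ := max (2 * A + 2) ((4 * Δ * (A + 2) + 3 * (D : ℝ) * M + Δ + A + 6) / m) with hRdef
  have hR1 : 2 * A + 2 ≤ R := le_max_left _ _
  have hR2 : 4 * Δ * (A + 2) + 3 * (D : ℝ) * M + Δ + A + 6 ≤ m * R := by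
    have h := le_max_right (2 * A + 2) ((4 * Δ * (A + 2) + 3 * (D : ℝ) * M + Δ + A + 6) / m)
    rw [div_le_iff₀ hm] at h
    linarith
  have hRpos : 0 < R := by linarith
  have key : ∀ j : ℤ,
      (∀ z : ℂ × ℂ, R < ‖z.2‖ → ‖z.1‖ ≤ ‖z.2‖ →
        (R < ‖((γ j).toFun z).2‖ ∧
          ‖((γ j).toFun z).1‖ ≤ ‖((γ j).toFun z).2‖) ∧
        2 * ‖z.2‖ ≤ ‖((γ j).toFun z).2‖) ∧
      (∀ z : ℂ × ℂ, R < ‖z.1‖ → ‖z.2‖ ≤ ‖z.1‖ →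
        (R < ‖((γ j).invFun z).1‖ ∧
          ‖((γ j).invFun z).2‖ ≤ ‖((γ j).invFun z).1‖) ∧
        2 * ‖z.1‖ ≤ ‖((γ j).invFun z).1‖) := by
    intro j
    obtain ⟨h1, h2, h3, h4, h5, h6⟩ := hbound (γ j) (hγ j)
    exact keyP A Δ m M D hA hΔpos hm (γ j) h1 h2 h4 h5 h6 R hR1 hR2
  have Fwd : ∀ z : ℂ × ℂ,
      (Tendsto (fun n => ‖fwd γ n z‖) atTop atTop ∨
        IsBounded (Set.range fun n => fwd γ n z)) ∧
      ¬(Tendsto (fun n => ‖fwd γ n z‖) atTop atTop ∧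
        IsBounded (Set.range fun n => fwd γ n z)) := by
    intro z
    refine dichotomy_aux R hRpos (fun n z => fwd γ n z)
      (fun w => ‖w.2‖) (fun w => ‖w.1‖)
      (fun w => by rw [Prod.norm_def]) (fun z => rfl)
      ?_ ?_ z
    · intro n z h1 h2
      exact (key (n : ℤ)).1 (fwd γ n z) h1 h2
    · intro n z h1 h2
      have h := (key (n : ℤ)).2 (fwd γ (n + 1) z) h1 h2
      have hinv : (γ (n : ℤ)).invFun (fwd γ (n + 1) z) = fwd γ n z := by
        rw [show fwd γ (n + 1) z = (γ (n : ℤ)).toFun (fwd γ n z) from rfl, henon_left_inv]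
      rw [hinv] at h
      exact h
  have Bwd : ∀ z : ℂ × ℂ,
      (Tendsto (fun n => ‖bwd γ n z‖) atTop atTop ∨
        IsBounded (Set.range fun n => bwd γ n z)) ∧
      ¬(Tendsto (fun n => ‖bwd γ n z‖) atTop atTop ∧
        IsBounded (Set.range fun n => bwd γ n z)) := by
    intro z
    refine dichotomy_aux R hRpos (fun n z => bwd γ n z)
      (fun w => ‖w.1‖) (fun w => ‖w.2‖)
      (fun w => by rw [Prod.norm_def, max_comm]) (fun z => rfl)
      ?_ ?_ z
    · intro n z h1 h2
      exact (key (-((n : ℤ) + 1))).2 (bwd γ n z) h1 h2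
    · intro n z h1 h2
      have h := (key (-((n : ℤ) + 1))).1 (bwd γ (n + 1) z) h1 h2
      have hinv : (γ (-((n : ℤ) + 1))).toFun (bwd γ (n + 1) z) = bwd γ n z := by
        rw [show bwd γ (n + 1) z = (γ (-((n : ℤ) + 1))).invFun (bwd γ n z) from rfl,
          henon_right_inv]
      rw [hinv] at h
      exact h
  refine ⟨?_, ?_, ?_, ?_⟩
  · ext z
    simp only [Set.mem_union, Set.mem_univ, iff_true, IPlus, KPlus, Set.mem_setOf_eq]
    exact (Fwd z).1
  · rw [Set.eq_empty_iff_forall_notMem]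
    intro z hz
    exact (Fwd z).2 ⟨hz.1, hz.2⟩
  · ext z
    simp only [Set.mem_union, Set.mem_univ, iff_true, IMinus, KMinus, Set.mem_setOf_eq]
    exact (Bwd z).1
  · rw [Set.eq_empty_iff_forall_notMem]
    intro z hz
    exact (Bwd z).2 ⟨hz.1, hz.2⟩
end
end

section
/- Let γ = (γ_j)_{j∈ℤ} be a sequence of Hénon-form maps, and suppose there exists R₀ > 0 such that for every R > R₀ there exists ρ > 1 such that every γ_j (j ∈ ℤ) satisfies condition (A) for (R, ρ). Then for every R > R₀, setting E_{γ,R} := D_R ∩ K_γ⁺: (i) for every n ≥ 1, E_{γ,R} ⊆ γ₀⁻¹(E_{σ(γ),R}) ⊆ (γ₁∘γ₀)⁻¹(E_{σ²(γ),R}) ⊆ ⋯ ⊆ (γ_{n−1}∘⋯∘γ₀)⁻¹(E_{σⁿ(γ),R}); and (ii) K_γ⁺ = ⋃_{n≥1} (γ_{n−1}∘⋯∘γ₀)⁻¹(E_{σⁿ(γ),R}). -/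
open Complex Filter Set Topology MeasureTheory Bornology

noncomputable section

lemma mem_closure_VPlus {R : ℝ} (hR : 0 < R) {z : ℂ × ℂ}
    (h : max R (‖z.1‖) ≤ ‖z.2‖) : z ∈ closure (VPlus R) := by
  have hz2 : 0 < ‖z.2‖ := lt_of_lt_of_le hR (le_trans (le_max_left _ _) h)
  have h0 : Tendsto (fun n : ℕ => ((n : ℝ) + 1)⁻¹) atTop (𝓝 0) := by
    simpa [one_div] using tendsto_one_div_add_atTop_nhds_zero_nat (𝕜 := ℝ)
  have hc : Tendsto (fun n : ℕ => (1 : ℝ) + ((n : ℝ) + 1)⁻¹) atTop (𝓝 1) := by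
    simpa using h0.const_add 1
  have hcc : Tendsto (fun n : ℕ => (((1 : ℝ) + ((n : ℝ) + 1)⁻¹ : ℝ) : ℂ) * z.2)
      atTop (𝓝 z.2) := by
    have := (Complex.continuous_ofReal.tendsto 1).comp hc
    simpa using this.mul_const z.2
  have ht : Tendsto (fun n : ℕ => ((z.1, (((1 : ℝ) + ((n : ℝ) + 1)⁻¹ : ℝ) : ℂ) * z.2) : ℂ × ℂ))
      atTop (𝓝 z) := by
    have := (tendsto_const_nhds (x := z.1) (f := atTop (α := ℕ))).prodMk_nhds hcc
    simpa using this
  refine mem_closure_of_tendsto ht (Eventually.of_forall fun n => ?_)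
  show max R ‖z.1‖ < ‖_‖
  rw [norm_mul, Complex.norm_real, Real.norm_eq_abs]
  have hpos : (0 : ℝ) < ((n : ℝ) + 1)⁻¹ := by positivity
  rw [abs_of_pos (by linarith : (0:ℝ) < 1 + ((n : ℝ) + 1)⁻¹)]
  refine lt_of_le_of_lt h ?_
  nlinarith

lemma mem_closure_VMinus {R : ℝ} (hR : 0 < R) {z : ℂ × ℂ}
    (h : max R (‖z.2‖) ≤ ‖z.1‖) : z ∈ closure (VMinus R) := by
  have hz1 : 0 < ‖z.1‖ := lt_of_lt_of_le hR (le_trans (le_max_left _ _) h)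
  have h0 : Tendsto (fun n : ℕ => ((n : ℝ) + 1)⁻¹) atTop (𝓝 0) := by
    simpa [one_div] using tendsto_one_div_add_atTop_nhds_zero_nat (𝕜 := ℝ)
  have hc : Tendsto (fun n : ℕ => (1 : ℝ) + ((n : ℝ) + 1)⁻¹) atTop (𝓝 1) := by
    simpa using h0.const_add 1
  have hcc : Tendsto (fun n : ℕ => (((1 : ℝ) + ((n : ℝ) + 1)⁻¹ : ℝ) : ℂ) * z.1)
      atTop (𝓝 z.1) := by
    have := (Complex.continuous_ofReal.tendsto 1).comp hc
    simpa using this.mul_const z.1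
  have ht : Tendsto (fun n : ℕ => (((((1 : ℝ) + ((n : ℝ) + 1)⁻¹ : ℝ) : ℂ) * z.1, z.2) : ℂ × ℂ))
      atTop (𝓝 z) := by
    have := hcc.prodMk_nhds (tendsto_const_nhds (x := z.2) (f := atTop (α := ℕ)))
    simpa using this
  refine mem_closure_of_tendsto ht (Eventually.of_forall fun n => ?_)
  show max R ‖z.2‖ < ‖_‖
  rw [norm_mul, Complex.norm_real, Real.norm_eq_abs]
  have hpos : (0 : ℝ) < ((n : ℝ) + 1)⁻¹ := by positivity
  rw [abs_of_pos (by linarith : (0:ℝ) < 1 + ((n : ℝ) + 1)⁻¹)]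
  refine lt_of_le_of_lt h ?_
  nlinarith

lemma escape (γ : ℤ → HenonMap) {R ρ : ℝ} (hρ : 1 < ρ)
    (h : ∀ j : ℤ, CondA (γ j) R ρ) {z : ℂ × ℂ} (hz : z ∈ closure (VPlus R)) :
    ∀ k : ℕ, fwd γ k z ∈ closure (VPlus R) ∧
      ρ ^ k * ‖z.2‖ ≤ ‖(fwd γ k z).2‖ := by
  intro k
  induction k with
  | zero => exact ⟨hz, by simp [fwd]⟩
  | succ k ih =>
    obtain ⟨h1, h2⟩ := ih
    obtain ⟨hmem, hgrow⟩ := (h k).1 _ h1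
    refine ⟨subset_closure hmem, ?_⟩
    have hρ0 : (0 : ℝ) < ρ := lt_trans one_pos hρ
    calc ρ ^ (k + 1) * ‖z.2‖ = ρ * (ρ ^ k * ‖z.2‖) := by ring
    _ ≤ ρ * ‖(fwd γ k z).2‖ := by
        exact mul_le_mul_of_nonneg_left h2 (le_of_lt hρ0)
    _ ≤ ‖(fwd γ (k + 1) z).2‖ := le_of_lt hgrow

lemma not_mem_KPlus (γ : ℤ → HenonMap) {R ρ : ℝ} (hR : 0 < R) (hρ : 1 < ρ)
    (h : ∀ j : ℤ, CondA (γ j) R ρ) {z : ℂ × ℂ}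
    (h' : max R (‖z.1‖) ≤ ‖z.2‖) : z ∉ KPlus γ := by
  intro hb
  rw [KPlus, mem_setOf_eq, isBounded_iff_forall_norm_le] at hb
  obtain ⟨C, hC⟩ := hb
  have hz2 : 0 < ‖z.2‖ := lt_of_lt_of_le hR (le_trans (le_max_left _ _) h')
  obtain ⟨k, hk⟩ := pow_unbounded_of_one_lt (C / ‖z.2‖) hρ
  have h2 := (escape γ hρ h (mem_closure_VPlus hR h') k).2
  have hCk : ‖fwd γ k z‖ ≤ C := hC _ (mem_range_self k)
  have habs : ‖(fwd γ k z).2‖ ≤ ‖fwd γ k z‖ := by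
    exact norm_snd_le _
  have hlt : C < ρ ^ k * ‖z.2‖ := (div_lt_iff₀ hz2).mp hk
  linarith

lemma fwd_shift (γ : ℤ → HenonMap) (n : ℕ) (z : ℂ × ℂ) :
    ∀ k : ℕ, fwd (shiftIter γ n) k (fwd γ n z) = fwd γ (n + k) z := by
  intro k
  induction k with
  | zero => simp [fwd]
  | succ k ih =>
    show (shiftIter γ n (k : ℤ)).toFun (fwd (shiftIter γ n) k (fwd γ n z))
        = (γ ((n + k : ℕ) : ℤ)).toFun (fwd γ (n + k) z)
    rw [ih]
    congr 2
    unfold shiftIter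
    congr 1
    push_cast
    ring

lemma shiftIter_shiftIter (γ : ℤ → HenonMap) (n m : ℕ) :
    shiftIter (shiftIter γ n) m = shiftIter γ (n + m) := by
  funext j
  unfold shiftIter
  congr 1
  push_cast
  ring

lemma KPlus_shift {γ : ℤ → HenonMap} {z : ℂ × ℂ} (hz : z ∈ KPlus γ) (n : ℕ) :
    fwd γ n z ∈ KPlus (shiftIter γ n) := by
  simp only [KPlus, mem_setOf_eq] at hz ⊢
  refine IsBounded.subset hz ?_
  rintro _ ⟨k, rfl⟩
  exact ⟨n + k, (fwd_shift γ n z k).symm⟩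

lemma step_DDisk (γ : ℤ → HenonMap) {R ρ : ℝ} (hR : 0 < R) (hρ : 1 < ρ)
    (h : ∀ j : ℤ, CondA (γ j) R ρ) {w : ℂ × ℂ} (hw : w ∈ DDisk R)
    (hb : w ∈ KPlus γ) : (γ 0).toFun w ∈ DDisk R := by
  by_contra hcon
  set w' := (γ 0).toFun w with hw'def
  have hw' : w' ∈ KPlus (shiftIter γ 1) := by
    have h1 := KPlus_shift hb 1
    have : fwd γ 1 w = w' := by simp [fwd, hw'def]
    rwa [this] at h1
  rw [DDisk, mem_setOf_eq, not_lt] at hcon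
  rcases le_total (‖w'.1‖) (‖w'.2‖) with hle | hle
  · have h' : max R (‖w'.1‖) ≤ ‖w'.2‖ := by
      refine max_le ?_ hle
      calc R ≤ max (‖w'.1‖) (‖w'.2‖) := hcon
      _ = ‖w'.2‖ := max_eq_right hle
    exact not_mem_KPlus (shiftIter γ 1) hR hρ (fun j => h _) h' hw'
  · have h' : max R (‖w'.2‖) ≤ ‖w'.1‖ := by
      refine max_le ?_ hle
      calc R ≤ max (‖w'.1‖) (‖w'.2‖) := hcon
      _ = ‖w'.1‖ := max_eq_left hle
    have hmem := ((h 0).2 w' (mem_closure_VMinus hR h')).1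
    rw [hw'def, henon_left_inv] at hmem
    rw [VMinus, mem_setOf_eq] at hmem
    rw [DDisk, mem_setOf_eq] at hw
    have hR1 : R < ‖w.1‖ := lt_of_le_of_lt (le_max_left _ _) hmem
    have : ‖w.1‖ < R := lt_of_le_of_lt (le_max_left _ _) hw
    linarith

/-- the increasing chain of preimages of `E_{σⁿ(γ),R}` and the description
of `K_γ⁺` as their union. -/
theorem stmt_7 (γ : ℤ → HenonMap) (R₀ : ℝ) (hR₀ : 0 < R₀)
    (hA : ∀ R : ℝ, R₀ < R → ∃ ρ : ℝ, 1 < ρ ∧ ∀ j : ℤ, CondA (γ j) R ρ) :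
    ∀ R : ℝ, R₀ < R →
      (∀ n : ℕ,
        fwd γ n ⁻¹' (DDisk R ∩ KPlus (shiftIter γ n)) ⊆
          fwd γ (n + 1) ⁻¹' (DDisk R ∩ KPlus (shiftIter γ (n + 1)))) ∧
      KPlus γ = ⋃ n : ℕ, fwd γ (n + 1) ⁻¹' (DDisk R ∩ KPlus (shiftIter γ (n + 1))) := by
  intro R hR
  obtain ⟨ρ, hρ, hcond⟩ := hA R hR
  have hRpos : 0 < R := lt_trans hR₀ hR
  constructor
  · intro n z hz
    obtain ⟨hD, hK⟩ := hz
    have hcond' : ∀ j : ℤ, CondA (shiftIter γ n j) R ρ := fun j => hcond _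
    have hstep : fwd γ (n + 1) z = ((shiftIter γ n) 0).toFun (fwd γ n z) := by
      show (γ ((n : ℕ) : ℤ)).toFun (fwd γ n z) = (γ ((0 : ℤ) + n)).toFun (fwd γ n z)
      rw [zero_add]
    constructor
    · show fwd γ (n + 1) z ∈ DDisk R
      rw [hstep]
      exact step_DDisk (shiftIter γ n) hRpos hρ hcond' hD hK
    · show fwd γ (n + 1) z ∈ KPlus (shiftIter γ (n + 1))
      have h1 := KPlus_shift hK 1
      rw [shiftIter_shiftIter] at h1
      have h2 : fwd (shiftIter γ n) 1 (fwd γ n z) = fwd γ (n + 1) z := fwd_shift γ n z 1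
      rwa [h2] at h1
  · ext z
    simp only [mem_iUnion, mem_preimage, mem_inter_iff]
    constructor
    · intro hz
      by_contra hcon
      push_neg at hcon
      have hmem : ∀ n : ℕ, fwd γ (n + 1) z ∈ KPlus (shiftIter γ (n + 1)) :=
        fun n => KPlus_shift hz (n + 1)
      have hout : ∀ n : ℕ, fwd γ (n + 1) z ∉ DDisk R :=
        fun n hd => hcon n hd (hmem n)
      have hVM : ∀ n : ℕ,
          max R (‖(fwd γ (n + 1) z).2‖) ≤ ‖(fwd γ (n + 1) z).1‖ := by
        intro n
        have hd := hout n
        rw [DDisk, mem_setOf_eq, not_lt] at hd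
        set w := fwd γ (n + 1) z with hwdef
        rcases le_total (‖w.1‖) (‖w.2‖) with hle | hle
        · exfalso
          have h' : max R (‖w.1‖) ≤ ‖w.2‖ := by
            refine max_le ?_ hle
            calc R ≤ max (‖w.1‖) (‖w.2‖) := hd
            _ = ‖w.2‖ := max_eq_right hle
          exact not_mem_KPlus (shiftIter γ (n + 1)) hRpos hρ (fun j => hcond _) h' (hmem n)
        · refine max_le ?_ hle
          calc R ≤ max (‖w.1‖) (‖w.2‖) := hd
          _ = ‖w.1‖ := max_eq_left hle
      have hdec : ∀ n : ℕ, ρ * ‖(fwd γ (n + 2) z).1‖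
          < ‖(fwd γ (n + 1) z).1‖ := by
        intro n
        have hcl := mem_closure_VMinus hRpos (hVM (n + 1))
        have hinv := ((hcond ((n : ℤ) + 1)).2 _ hcl).2
        have heq : (γ ((n : ℤ) + 1)).invFun (fwd γ (n + 2) z) = fwd γ (n + 1) z := by
          have hst : fwd γ (n + 2) z = (γ ((n : ℤ) + 1)).toFun (fwd γ (n + 1) z) := by
            have hc : ((n + 1 : ℕ) : ℤ) = (n : ℤ) + 1 := by push_cast; ring
            show (γ (((n + 1 : ℕ)) : ℤ)).toFun (fwd γ (n + 1) z) = _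
            rw [hc]
          rw [hst, henon_left_inv]
        rwa [heq] at hinv
      have hρ0 : (0 : ℝ) < ρ := lt_trans one_pos hρ
      have hiter : ∀ k : ℕ,
          ρ ^ k * ‖(fwd γ (k + 1) z).1‖ ≤ ‖(fwd γ 1 z).1‖ := by
        intro k
        induction k with
        | zero =>
          rw [pow_zero, one_mul]
        | succ k ih =>
          have hd := hdec k
          calc ρ ^ (k + 1) * ‖(fwd γ (k + 2) z).1‖
              = ρ ^ k * (ρ * ‖(fwd γ (k + 2) z).1‖) := by ring
          _ ≤ ρ ^ k * ‖(fwd γ (k + 1) z).1‖ := by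
              exact mul_le_mul_of_nonneg_left (le_of_lt hd) (by positivity)
          _ ≤ ‖(fwd γ 1 z).1‖ := ih
      obtain ⟨k, hk⟩ := pow_unbounded_of_one_lt (‖(fwd γ 1 z).1‖ / R) hρ
      have hRk : R ≤ ‖(fwd γ (k + 1) z).1‖ :=
        le_trans (le_max_left _ _) (hVM k)
      have h1 : ‖(fwd γ 1 z).1‖ < ρ ^ k * R := (div_lt_iff₀ hRpos).mp hk
      have h2 : ρ ^ k * R ≤ ρ ^ k * ‖(fwd γ (k + 1) z).1‖ :=
        mul_le_mul_of_nonneg_left hRk (by positivity)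
      have h3 := hiter k
      linarith
    · rintro ⟨n, hD, hK⟩
      rw [KPlus, mem_setOf_eq]
      have hfin : IsBounded ((fun m : ℕ => fwd γ m z) '' (Set.Iic n)) :=
        ((Set.finite_Iic n).image _).isBounded
      have htail : IsBounded
          (Set.range fun k : ℕ => fwd (shiftIter γ (n + 1)) k (fwd γ (n + 1) z)) := hK
      refine (hfin.union htail).subset ?_
      rintro _ ⟨m, rfl⟩
      rcases le_or_gt m n with hm | hm
      · exact Or.inl ⟨m, hm, rfl⟩
      · refine Or.inr ⟨m - (n + 1), ?_⟩
        show fwd (shiftIter γ (n + 1)) (m - (n + 1)) (fwd γ (n + 1) z) = fwd γ m z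
        rw [fwd_shift]
        congr 1
        omega
end
end

section
/- Let γ = (γ_j)_{j∈ℤ} be a sequence of Hénon-form maps, and suppose there exists R₀ > 0 such that for every R > R₀ there exists ρ > 1 such that every γ_j (j ∈ ℤ) satisfies condition (A) for (R, ρ). Suppose limsup_{n→∞} (1/n) Σ_{j=0}^{n−1} log|δ(γ_j)| < 0, and suppose there exists a nonempty bounded open set U ⊆ ℂ² such that γ_j(U) ⊆ U for every j ≥ 0. Then Leb₄(K_γ⁺) = ∞. -/
open Complex Filter Set Topology MeasureTheory Bornology

noncomputable section

lemma det_mulLeft (c : ℂ) : LinearMap.det (LinearMap.mulLeft ℝ c) = Complex.normSq c := by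
  rw [← LinearMap.det_toMatrix Complex.basisOneI]
  have : LinearMap.toMatrix Complex.basisOneI Complex.basisOneI (LinearMap.mulLeft ℝ c)
      = !![c.re, -c.im; c.im, c.re] := by
    ext i j
    rw [LinearMap.toMatrix_apply]
    fin_cases i <;> fin_cases j <;>
      simp [Complex.coe_basisOneI_repr, Complex.coe_basisOneI, Complex.normSq]
  rw [this, Matrix.det_fin_two_of, Complex.normSq_apply]; ring

lemma map_mul_volume {c : ℂ} (hc : c ≠ 0) :
    Measure.map (fun z : ℂ => c * z) volume
      = ENNReal.ofReal (Complex.normSq c)⁻¹ • volume := by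
  have hdet : LinearMap.det (LinearMap.mulLeft ℝ c) ≠ 0 := by
    rw [det_mulLeft]; simpa using (Complex.normSq_pos.2 hc).ne'
  have := Measure.map_linearMap_addHaar_eq_smul_addHaar (μ := volume) hdet
  rw [det_mulLeft, _root_.abs_of_nonneg (inv_nonneg.2 (Complex.normSq_nonneg c))] at this
  exact this

lemma map_affine_volume {c : ℂ} (hc : c ≠ 0) (b : ℂ) :
    Measure.map (fun z : ℂ => b - c * z) volume
      = ENNReal.ofReal (Complex.normSq c)⁻¹ • volume := by
  have h1 : (fun z : ℂ => b - c * z) = (fun w : ℂ => b + w) ∘ (fun z : ℂ => (-c) * z) := by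
    funext z; simp; ring
  rw [h1, ← Measure.map_map (by fun_prop) (by fun_prop), map_mul_volume (neg_ne_zero.2 hc),
    Measure.map_smul, map_add_left_eq_self, Complex.normSq_neg]

lemma prod_smul_right {α β : Type*} [MeasurableSpace α] [MeasurableSpace β]
    (μ : Measure α) (ν : Measure β) [SFinite μ] [SFinite ν] (c : ENNReal) :
    μ.prod (c • ν) = c • μ.prod ν := by
  ext s hs
  rw [Measure.prod_apply hs, Measure.smul_apply, Measure.prod_apply hs, smul_eq_mul,
    ← lintegral_const_mul c (measurable_measure_prodMk_left hs)]
  simp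

lemma henon_map_volume (f : HenonMap) :
    Measure.map f.toFun volume = ENNReal.ofReal (Complex.normSq f.δ)⁻¹ • volume := by
  set c : ENNReal := ENNReal.ofReal (Complex.normSq f.δ)⁻¹ with hc
  have hT : MeasurePreserving (fun q : ℂ × ℂ => ((q.1 + f.a, f.p.eval q.1 - f.δ * q.2)))
      ((volume : Measure ℂ).prod (volume : Measure ℂ))
      ((volume : Measure ℂ).prod (c • (volume : Measure ℂ))) := by
    exact MeasurePreserving.skew_product (f := fun y => y + f.a)
      (g := fun y x => f.p.eval y - f.δ * x)
      (measurePreserving_add_right volume f.a) (by fun_prop)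
      (ae_of_all _ fun y => map_affine_volume f.hδ _)
  have hswap : MeasurePreserving (Prod.swap : ℂ × ℂ → ℂ × ℂ)
      ((volume : Measure ℂ).prod (volume : Measure ℂ))
      ((volume : Measure ℂ).prod (volume : Measure ℂ)) := Measure.measurePreserving_swap
  have hcomp : f.toFun = (fun q : ℂ × ℂ => ((q.1 + f.a, f.p.eval q.1 - f.δ * q.2))) ∘ Prod.swap := by
    funext z; rfl
  rw [Measure.volume_eq_prod, hcomp, ← Measure.map_map hT.measurable measurable_swap,
    hswap.map_eq, hT.map_eq, prod_smul_right]

lemma henon_vol_preimage (f : HenonMap) {S : Set (ℂ × ℂ)} (hS : MeasurableSet S) :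
    volume (f.toFun ⁻¹' S) = ENNReal.ofReal (Complex.normSq f.δ)⁻¹ * volume S := by
  have hm : Measurable f.toFun := by
    apply Measurable.prod <;> simp only [HenonMap.toFun]
    · fun_prop
    · exact ((f.p.continuous.measurable.comp measurable_snd).sub
        (measurable_fst.const_mul f.δ))
  rw [← Measure.map_apply hm hS, henon_map_volume, Measure.smul_apply, smul_eq_mul]

lemma henon_measurable (f : HenonMap) : Measurable f.toFun := by
  apply Measurable.prod <;> simp only [HenonMap.toFun]
  · fun_prop
  · exact ((f.p.continuous.measurable.comp measurable_snd).sub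
      (measurable_fst.const_mul f.δ))

lemma fwd_vol_preimage (γ : ℤ → HenonMap) (n : ℕ) {S : Set (ℂ × ℂ)} (hS : MeasurableSet S) :
    volume (fwd γ n ⁻¹' S)
      = (∏ j ∈ Finset.range n, ENNReal.ofReal (Complex.normSq (γ (j : ℤ)).δ)⁻¹) * volume S := by
  induction n generalizing S with
  | zero => simp [fwd]
  | succ n ih =>
      have h1 : fwd γ (n + 1) ⁻¹' S = fwd γ n ⁻¹' ((γ (n : ℤ)).toFun ⁻¹' S) := rfl
      rw [h1, ih (henon_measurable _ hS), henon_vol_preimage _ hS, Finset.prod_range_succ]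
      ring

lemma fwd_mem_U (γ : ℤ → HenonMap) (U : Set (ℂ × ℂ))
    (hUinv : ∀ j : ℕ, (γ (j : ℤ)).toFun '' U ⊆ U) {z : ℂ × ℂ} {n : ℕ}
    (hz : fwd γ n z ∈ U) : ∀ m, n ≤ m → fwd γ m z ∈ U := by
  intro m hm
  induction m with
  | zero => simpa [Nat.le_zero.1 hm] using hz
  | succ m ih =>
      rcases Nat.lt_or_ge n (m + 1) with h | h
      · have : fwd γ m z ∈ U := ih (Nat.lt_succ_iff.1 h)
        exact hUinv m ⟨fwd γ m z, this, rfl⟩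
      · have : n = m + 1 := le_antisymm hm h
        rw [← this]; exact hz

lemma preimage_subset_KPlus (γ : ℤ → HenonMap) (U : Set (ℂ × ℂ)) (hUb : IsBounded U)
    (hUinv : ∀ j : ℕ, (γ (j : ℤ)).toFun '' U ⊆ U) (n : ℕ) :
    fwd γ n ⁻¹' U ⊆ KPlus γ := by
  intro z hz
  have hsub : (Set.range fun m : ℕ => fwd γ m z)
      ⊆ ((fun m : ℕ => fwd γ m z) '' Set.Iic n) ∪ U := by
    rintro _ ⟨m, rfl⟩
    rcases le_or_gt m n with h | h
    · exact Or.inl ⟨m, h, rfl⟩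
    · exact Or.inr (fwd_mem_U γ U hUinv hz m h.le)
  exact (((Set.finite_Iic n).image _).isBounded.union hUb).subset hsub

theorem stmt_10' (γ : ℤ → HenonMap)
    (hlim : Filter.limsup
      (fun n : ℕ => ((((1 : ℝ) / n) * ∑ j ∈ Finset.range n,
        Real.log (‖(γ (j : ℤ)).δ‖) : ℝ) : EReal)) Filter.atTop < 0)
    (U : Set (ℂ × ℂ)) (hUne : U.Nonempty) (hUb : IsBounded U) (hUo : IsOpen U)
    (hUinv : ∀ j : ℕ, (γ (j : ℤ)).toFun '' U ⊆ U) :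
    volume (KPlus γ) = ⊤ := by
  by_contra hV
  set V := volume (KPlus γ) with hVdef
  have hVlt : V ≠ ⊤ := hV
  have hUpos : 0 < volume U := hUo.measure_pos volume hUne
  have hUlt : volume U ≠ ⊤ := hUb.measure_lt_top.ne
  -- get real c < 0 with eventual bound
  obtain ⟨x, hx1, hx2⟩ := exists_between hlim
  have hxbot : x ≠ ⊥ := (lt_of_le_of_lt bot_le hx1).ne'
  have hxtop : x ≠ ⊤ := (hx2.trans_le le_top).ne
  set c : ℝ := x.toReal with hcdef
  have hxc : x = (c : EReal) := (EReal.coe_toReal hxtop hxbot).symm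
  have hc0 : c < 0 := by
    have := hx2; rw [hxc] at this; exact_mod_cast this
  have hev : ∀ᶠ n : ℕ in atTop,
      (((1 : ℝ) / n) * ∑ j ∈ Finset.range n, Real.log (‖(γ (j : ℤ)).δ‖)) < c := by
    have := Filter.eventually_lt_of_limsup_lt hx1
    filter_upwards [this] with n hn
    rw [hxc] at hn; exact_mod_cast hn
  -- upper bound on product of normSq
  have hbound : ∀ᶠ n : ℕ in atTop,
      volume U ≤ ENNReal.ofReal (Real.exp (2 * (c * n))) * V := by
    filter_upwards [hev, Filter.eventually_ge_atTop 1] with n hn hn1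
    have hnpos : (0 : ℝ) < n := by exact_mod_cast hn1
    have hsum : ∑ j ∈ Finset.range n, Real.log (‖(γ (j : ℤ)).δ‖) ≤ c * n := by
      have := (mul_lt_mul_iff_right₀ hnpos).2 hn
      rw [← mul_assoc, mul_one_div, div_self hnpos.ne', one_mul] at this
      linarith [this]
    have hprod : (∏ j ∈ Finset.range n, Complex.normSq (γ (j : ℤ)).δ)
        ≤ Real.exp (2 * (c * n)) := by
      have heq : (∏ j ∈ Finset.range n, Complex.normSq (γ (j : ℤ)).δ)
          = Real.exp (2 * ∑ j ∈ Finset.range n, Real.log (‖(γ (j : ℤ)).δ‖)) := by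
        rw [Finset.mul_sum, Real.exp_sum]
        refine Finset.prod_congr rfl fun j _ => ?_
        have habs : (0 : ℝ) < ‖(γ (j : ℤ)).δ‖ :=
          norm_pos_iff.2 (γ (j : ℤ)).hδ
        rw [← Complex.sq_norm, two_mul, Real.exp_add, Real.exp_log habs, sq]
      rw [heq]
      exact Real.exp_le_exp.2 (by linarith)
    -- volume of W_n
    have hWn : volume (fwd γ n ⁻¹' U)
        = (∏ j ∈ Finset.range n, ENNReal.ofReal (Complex.normSq (γ (j : ℤ)).δ)⁻¹) * volume U :=
      fwd_vol_preimage γ n hUo.measurableSet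
    have hWle : volume (fwd γ n ⁻¹' U) ≤ V :=
      measure_mono (preimage_subset_KPlus γ U hUb hUinv n)
    set P : ℝ := ∏ j ∈ Finset.range n, Complex.normSq (γ (j : ℤ)).δ with hPdef
    have hPpos : 0 < P := Finset.prod_pos fun j _ => Complex.normSq_pos.2 (γ (j : ℤ)).hδ
    have hprodE : (∏ j ∈ Finset.range n, ENNReal.ofReal (Complex.normSq (γ (j : ℤ)).δ)⁻¹)
        = ENNReal.ofReal P⁻¹ := by
      rw [← ENNReal.ofReal_prod_of_nonneg fun j _ => inv_nonneg.2 (Complex.normSq_nonneg _),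
        ← Finset.prod_inv_distrib]
    rw [hWn, hprodE] at hWle
    -- vol U = ofReal P * (ofReal P⁻¹ * vol U) ≤ ofReal P * V ≤ ofReal exp * V
    have h1 : volume U ≤ ENNReal.ofReal P * V := by
      have := mul_le_mul_right hWle (ENNReal.ofReal P)
      rwa [← mul_assoc, ← ENNReal.ofReal_mul hPpos.le, mul_inv_cancel₀ hPpos.ne',
        ENNReal.ofReal_one, one_mul] at this
    exact h1.trans (mul_le_mul_left (ENNReal.ofReal_le_ofReal hprod) V)
  -- RHS tends to 0
  have htend : Tendsto (fun n : ℕ => ENNReal.ofReal (Real.exp (2 * (c * n))) * V)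
      atTop (nhds 0) := by
    have h1 : Tendsto (fun n : ℕ => 2 * (c * (n : ℝ))) atTop atBot := by
      have h2 : Tendsto (fun n : ℕ => (n : ℝ)) atTop atTop := tendsto_natCast_atTop_atTop
      have h3 : (0:ℝ) < -(2 * c) := by linarith
      have := (tendsto_const_mul_atBot_of_neg (r := 2 * c) (by linarith)).2 h2
      simpa [mul_assoc] using this
    have h4 : Tendsto (fun n : ℕ => Real.exp (2 * (c * (n : ℝ)))) atTop (nhds 0) :=
      Real.tendsto_exp_atBot.comp h1
    have h5 : Tendsto (fun n : ℕ => ENNReal.ofReal (Real.exp (2 * (c * (n : ℝ)))))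
        atTop (nhds 0) := by
      have := (ENNReal.continuous_ofReal.tendsto 0).comp h4
      simpa [Function.comp_def] using this
    have := ENNReal.Tendsto.mul_const h5 (Or.inr hVlt)
    simpa using this
  have : ∀ᶠ n : ℕ in atTop, ENNReal.ofReal (Real.exp (2 * (c * n))) * V < volume U :=
    htend.eventually_lt_const hUpos
  obtain ⟨n, h1, h2⟩ := (hbound.and this).exists
  exact absurd (h1.trans_lt h2) (lt_irrefl _)

/-- negative limsup of average log-Jacobians plus a bounded forward
invariant nonempty open set forces `Leb₄(K_γ⁺) = ∞`. -/
theorem stmt_10 (γ : ℤ → HenonMap) (R₀ : ℝ) (hR₀ : 0 < R₀)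
    (hA : ∀ R : ℝ, R₀ < R → ∃ ρ : ℝ, 1 < ρ ∧ ∀ j : ℤ, CondA (γ j) R ρ)
    (hlim : Filter.limsup
      (fun n : ℕ => ((((1 : ℝ) / n) * ∑ j ∈ Finset.range n,
        Real.log (‖(γ (j : ℤ)).δ‖) : ℝ) : EReal)) Filter.atTop < 0)
    (U : Set (ℂ × ℂ)) (hUne : U.Nonempty) (hUb : IsBounded U) (hUo : IsOpen U)
    (hUinv : ∀ j : ℕ, (γ (j : ℤ)).toFun '' U ⊆ U) :
    volume (KPlus γ) = ⊤ := by
  exact stmt_10' γ hlim U hUne hUb hUo hUinv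
end
end
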